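/- arXiv:2412.14041 — 7 statements merged into one kernel-verified Lean document; each statement's English description precedes it below -/
import Mathlib

section
/- Let Y be a nontrivial complex Banach space, let M : Y → Y be a map with M 0 = 0, and let L : Y →L[ℂ] Y be a continuous linear operator whose spectral radius satisfies spectralRadius ℂ L > 1. Assume there exist p > 1, C > 0 and r₀ > 0 such that ‖M y − L y‖ ≤ C·‖y‖^p for all y with ‖y‖ ≤ r₀. Then 0 is an unstable fixed point of M: there exists ε₀ > 0 such that for every η > 0 and every N₀ ∈ ℕ there exist n ≥ N₀ and y ∈ Y with ‖y‖ < η and ‖M^[n] y‖ ≥ ε₀ (where M^[n] denotes the n-th iterate of M). -/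
open scoped ENNReal NNReal

section HPWAux
set_option linter.unusedSectionVars false
set_option maxHeartbeats 1000000
variable {Y : Type*} [NormedAddCommGroup Y] [NormedSpace ℂ Y] [CompleteSpace Y] [Nontrivial Y]

lemma approx_eig (L : Y →L[ℂ] Y) (μ : ℂ) (hμ : μ ∈ spectrum ℂ L)
    (hmax : ∀ z ∈ spectrum ℂ L, ‖z‖ ≤ ‖μ‖) (hr : 1 < ‖μ‖) (δ : ℝ) (hδ : 0 < δ) :
    ∃ x : Y, ‖x‖ = 1 ∧ ‖L x - μ • x‖ ≤ δ := by
  have hr0 : (0:ℝ) < ‖μ‖ := lt_trans one_pos hr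
  have hμ0 : ‖μ‖ ≠ 0 := ne_of_gt hr0
  have hunit : ∀ s : ℝ, 0 < s → IsUnit (algebraMap ℂ (Y →L[ℂ] Y) (μ * (1+s)) - L) := by
    intro s hs
    have hns : (μ * (1+s)) ∉ spectrum ℂ L := by
      intro hmem
      have h1 := hmax _ hmem
      have hn : ‖μ * ((1:ℂ)+s)‖ = ‖μ‖ * (1+s) := by
        rw [norm_mul]
        congr 1
        have : ((1:ℂ)+s) = ((1+s : ℝ) : ℂ) := by push_cast; ring
        rw [this, Complex.norm_real, Real.norm_eq_abs]
        exact abs_of_pos (by linarith)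
      nlinarith
    exact not_not.mp fun h => hns (spectrum.mem_iff.mpr h)
  have key : ∃ s : ℝ, ∃ hs : 0 < s, ‖μ‖ * s ≤ δ/2 ∧
      4/δ ≤ ‖((((hunit s hs).unit⁻¹ : (Y →L[ℂ] Y)ˣ)) : Y →L[ℂ] Y)‖ := by
    by_contra hcon
    push_neg at hcon
    set s : ℝ := δ/8 * ‖μ‖⁻¹ with hsdef
    have hs : 0 < s := by positivity
    have hμs : ‖μ‖ * s = δ/8 := by
      rw [hsdef, mul_comm, mul_assoc, inv_mul_cancel₀ hμ0, mul_one]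
    have h2 : ‖μ‖ * s ≤ δ/2 := by rw [hμs]; linarith
    have hR := hcon s hs h2
    set R : Y →L[ℂ] Y := (((hunit s hs).unit⁻¹ : (Y →L[ℂ] Y)ˣ) : Y →L[ℂ] Y) with hRdef
    have hR0 : 0 < ‖R‖ := Units.norm_pos _
    have hinv : δ/4 < ‖R‖⁻¹ := by
      have h4 : ‖R‖⁻¹ > (4/δ)⁻¹ := inv_strictAnti₀ hR0 hR
      calc δ/4 = (4/δ)⁻¹ := by field_simp
        _ < ‖R‖⁻¹ := h4
    have hnear : ‖(algebraMap ℂ (Y →L[ℂ] Y) μ - L) -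
        ((hunit s hs).unit : Y →L[ℂ] Y)‖ < ‖R‖⁻¹ := by
      rw [IsUnit.unit_spec]
      have heq : (algebraMap ℂ (Y →L[ℂ] Y) μ - L) - (algebraMap ℂ (Y →L[ℂ] Y) (μ * (1+s)) - L)
          = algebraMap ℂ (Y →L[ℂ] Y) (μ - μ * (1+s)) := by
        rw [map_sub]; abel
      rw [heq, Algebra.algebraMap_eq_smul_one, norm_smul, norm_one, mul_one]
      have h5 : ‖μ - μ * (1+(s:ℂ))‖ = ‖μ‖ * s := by
        have : μ - μ * (1+(s:ℂ)) = -(μ * s) := by ring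
        rw [this, norm_neg, norm_mul, Complex.norm_real, Real.norm_eq_abs, abs_of_pos hs]
      rw [h5, hμs]; linarith
    exact (spectrum.mem_iff.mp hμ)
      ((Units.ofNearby (hunit s hs).unit _ hnear).isUnit)
  obtain ⟨s, hs, hsδ, hR4⟩ := key
  set R : Y →L[ℂ] Y := (((hunit s hs).unit⁻¹ : (Y →L[ℂ] Y)ˣ) : Y →L[ℂ] Y) with hRdef
  have hR0 : 0 < ‖R‖ := Units.norm_pos _
  have hu : ∃ u : Y, ‖R‖/2 * ‖u‖ < ‖R u‖ := by
    by_contra hcon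
    push_neg at hcon
    have := ContinuousLinearMap.opNorm_le_bound R (by positivity) (fun u => hcon u)
    linarith
  obtain ⟨u, hu⟩ := hu
  set v : Y := R u with hvdef
  have hv0 : 0 < ‖v‖ := lt_of_le_of_lt (by positivity) hu
  set x : Y := ‖v‖⁻¹ • v with hxdef
  have hx1 : ‖x‖ = 1 := by
    rw [hxdef, norm_smul, norm_inv, norm_norm, inv_mul_cancel₀ (ne_of_gt hv0)]
  refine ⟨x, hx1, ?_⟩
  set T : Y →L[ℂ] Y := algebraMap ℂ (Y →L[ℂ] Y) (μ * (1+s)) - L with hTdef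
  have hTR : T * R = 1 := (hunit s hs).mul_val_inv
  have hTv : T v = u := by
    calc T v = (T * R) u := rfl
      _ = u := by rw [hTR]; rfl
  have hTapp : T x = (μ * (1+s)) • x - L x := by
    rw [hTdef]
    simp [ContinuousLinearMap.sub_apply, Algebra.algebraMap_eq_smul_one]
  have hid : L x - μ • x = (μ * s) • x - T x := by
    rw [hTapp]
    have : (μ * ((1:ℂ)+s)) • x = μ • x + (μ * s) • x := by
      rw [← add_smul]; congr 1; ring
    rw [this]; abel
  rw [hid]
  have h1 : ‖(μ * (s:ℂ)) • x‖ ≤ δ/2 := by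
    rw [norm_smul, hx1, mul_one, norm_mul, Complex.norm_real, Real.norm_eq_abs, abs_of_pos hs]
    exact hsδ
  have h2 : ‖T x‖ ≤ δ/2 := by
    have hTx : T x = ‖v‖⁻¹ • u := by rw [hxdef, T.map_smul_of_tower, hTv]
    rw [hTx, norm_smul, norm_inv, norm_norm]
    have hv2 : (2/δ) * ‖u‖ ≤ ‖v‖ := by
      have h24 : (2:ℝ)/δ ≤ ‖R‖/2 := by
        have h' : (2:ℝ)/δ = (4/δ)/2 := by ring
        rw [h']; linarith
      have : (2/δ) * ‖u‖ ≤ ‖R‖/2 * ‖u‖ :=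
        mul_le_mul_of_nonneg_right h24 (norm_nonneg u)
      linarith
    rw [inv_mul_le_iff₀ hv0]
    calc ‖u‖ = (δ/2) * ((2/δ) * ‖u‖) := by field_simp
      _ ≤ (δ/2) * ‖v‖ := mul_le_mul_of_nonneg_left hv2 (by linarith)
      _ = ‖v‖ * (δ/2) := by ring
  calc ‖(μ * (s:ℂ)) • x - T x‖ ≤ ‖(μ * (s:ℂ)) • x‖ + ‖T x‖ := norm_sub_le _ _
    _ ≤ δ/2 + δ/2 := add_le_add h1 h2
    _ = δ := by ring

lemma growth_bound (L : Y →L[ℂ] Y) (b : ℝ) (hb1 : 1 ≤ b)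
    (hb : spectralRadius ℂ L < ENNReal.ofReal b) :
    ∃ Cb : ℝ, 1 ≤ Cb ∧ ∀ n : ℕ, ‖L^n‖ ≤ Cb * b^n := by
  have hb0 : (0:ℝ) < b := lt_of_lt_of_le one_pos hb1
  have htend := spectrum.pow_nnnorm_pow_one_div_tendsto_nhds_spectralRadius L
  have hev : ∀ᶠ n : ℕ in Filter.atTop, (‖L^n‖₊ : ℝ≥0∞) ^ (1/(n:ℝ)) < ENNReal.ofReal b :=
    htend.eventually_lt_const hb
  obtain ⟨N, hN⟩ := Filter.eventually_atTop.mp (hev.and (Filter.eventually_ge_atTop 1))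
  have hbig : ∀ n, N ≤ n → ‖L^n‖ ≤ b^n := by
    intro n hn
    obtain ⟨h1, h2⟩ := hN n hn
    have hn0 : (n:ℝ) ≠ 0 := by
      have h5 : (0:ℕ) < n := lt_of_lt_of_le one_pos h2
      positivity
    have h3 : ((‖L^n‖₊ : ℝ≥0∞) ^ (1/(n:ℝ))) ^ (n:ℝ) ≤ (ENNReal.ofReal b) ^ (n:ℝ) :=
      ENNReal.rpow_le_rpow (le_of_lt h1) (by positivity)
    rw [← ENNReal.rpow_mul, one_div, inv_mul_cancel₀ hn0, ENNReal.rpow_one] at h3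
    rw [ENNReal.ofReal_rpow_of_pos hb0] at h3
    have h4 : ‖L^n‖ ≤ b ^ (n:ℝ) := by
      have := ENNReal.coe_le_coe.mp (h3.trans_eq (by
        rw [ENNReal.ofReal_eq_coe_nnreal (by positivity)]))
      calc ‖L^n‖ = ((‖L^n‖₊ : ℝ≥0) : ℝ) := rfl
        _ ≤ _ := by exact_mod_cast this
    rwa [Real.rpow_natCast] at h4
  classical
  set Cb : ℝ := max 1 ((Finset.range N).sum fun k => ‖L^k‖) with hCb
  refine ⟨Cb, le_max_left _ _, fun n => ?_⟩
  have hbn : (1:ℝ) ≤ b^n := one_le_pow₀ hb1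
  by_cases h : N ≤ n
  · calc ‖L^n‖ ≤ b^n := hbig n h
      _ = 1 * b^n := (one_mul _).symm
      _ ≤ Cb * b^n := by
        apply mul_le_mul_of_nonneg_right (le_max_left _ _) (by positivity)
  · push_neg at h
    have : ‖L^n‖ ≤ (Finset.range N).sum fun k => ‖L^k‖ :=
      Finset.single_le_sum (fun k _ => norm_nonneg _) (Finset.mem_range.mpr h)
    calc ‖L^n‖ ≤ (Finset.range N).sum fun k => ‖L^k‖ := this
      _ ≤ Cb := le_max_right _ _
      _ = Cb * 1 := (mul_one _).symm
      _ ≤ Cb * b^n := by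
        apply mul_le_mul_of_nonneg_left hbn (le_trans zero_le_one (le_max_left _ _))

lemma telescope (L : Y →L[ℂ] Y) (y w E : ℕ → Y) (h0 : y 0 = w 0)
    (hE : ∀ k, y (k+1) - w (k+1) = L (y k) - L (w k) + E k) :
    ∀ k, y k - w k = (Finset.range k).sum (fun j => (L^(k-1-j)) (E j)) := by
  intro k; induction k with
  | zero => simp [h0]
  | succ k ih =>
    rw [Finset.sum_range_succ]
    have h1 : y (k+1) - w (k+1) = L (y k - w k) + E k := by rw [map_sub]; exact hE k
    rw [h1, ih, map_sum]
    congr 1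
    · apply Finset.sum_congr rfl
      intro j hj
      have hj' : j < k := Finset.mem_range.mp hj
      have h2 : k + 1 - 1 - j = (k - 1 - j) + 1 := by omega
      rw [h2, pow_succ']
      rfl
    · have h3 : k + 1 - 1 - k = 0 := by omega
      rw [h3, pow_zero]
      rfl

lemma orbit_close (M : Y → Y) (L : Y →L[ℂ] Y)
    (p C r₀ : ℝ) (hp : 1 < p) (hC : 0 < C) (hr₀ : 0 < r₀)
    (hML : ∀ y : Y, ‖y‖ ≤ r₀ → ‖M y - L y‖ ≤ C * ‖y‖ ^ p)
    (μ : ℂ) (hr1 : 1 < ‖μ‖)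
    (b Cb : ℝ) (hbr : ‖μ‖ < b) (hbrp : b < ‖μ‖ ^ p)
    (hCb1 : 1 ≤ Cb) (hCb : ∀ k : ℕ, ‖L^k‖ ≤ Cb * b^k)
    (x : Y) (hx : ‖x‖ = 1) (δ : ℝ) (hδ0 : 0 < δ) (hxe : ‖L x - μ • x‖ ≤ δ)
    (t : ℝ) (ht : 0 < t) (n : ℕ)
    (H1 : ∀ k ≤ n, 2 * t * ‖μ‖^k ≤ r₀)
    (H2 : ∀ k ≤ n, Cb * δ * b^k ≤ (b - ‖μ‖)/4 * ‖μ‖^k)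
    (H3 : ∀ k ≤ n, Cb * C * (2*t)^p * (‖μ‖^p)^k ≤ (‖μ‖^p - b)/4 * (t * ‖μ‖^k)) :
    ∀ k ≤ n, ‖M^[k] ((t:ℂ) • x) - (μ^k * t) • x‖ ≤ 1/2 * (t * ‖μ‖^k) := by
  set r : ℝ := ‖μ‖ with hrdef
  have hr0 : (0:ℝ) < r := lt_trans one_pos hr1
  have hb0 : (0:ℝ) < b := lt_trans hr0 hbr
  have hrp0 : (0:ℝ) < r ^ p := Real.rpow_pos_of_pos hr0 p
  have hp0 : (0:ℝ) < p := lt_trans one_pos hp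
  have hbr' : (0:ℝ) < b - r := by linarith
  have hrpb : (0:ℝ) < r^p - b := by linarith
  set y : ℕ → Y := fun j => M^[j] ((t:ℂ) • x) with hydef
  set w : ℕ → Y := fun j => (μ^j * t) • x with hwdef
  set E : ℕ → Y := fun j => (M (y j) - L (y j)) + (μ^j * (t:ℂ)) • (L x - μ • x) with hEdef
  have hw_norm : ∀ j, ‖w j‖ = t * r^j := by
    intro j
    rw [hwdef]
    simp only [norm_smul, hx, mul_one, norm_mul, norm_pow]
    rw [Complex.norm_real, Real.norm_eq_abs, abs_of_pos ht]
    ring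
  have h0 : y 0 = w 0 := by simp [hydef, hwdef]
  have hE' : ∀ k, y (k+1) - w (k+1) = L (y k) - L (w k) + E k := by
    intro k
    have hyk : y (k+1) = M (y k) := by
      rw [hydef]; exact Function.iterate_succ_apply' M k _
    have hLw : L (w k) = (μ^k * (t:ℂ)) • L x := by rw [hwdef]; simp
    rw [hyk, hEdef, hLw, hwdef]
    simp only [smul_sub, smul_smul]
    have h4 : μ ^ (k+1) * (t:ℂ) = (μ^k * t) * μ := by ring
    rw [h4, ← smul_smul]
    abel_nf
  have hiter := telescope L y w E h0 hE'
  intro k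
  induction k using Nat.strong_induction_on with
  | _ k ih =>
  intro hk
  have hEbound : ∀ j, j < k → ‖E j‖ ≤ C * ((2*t)^p * (r^p)^j) + t * r^j * δ := by
    intro j hj
    have hjn : j ≤ n := le_trans (le_of_lt hj) hk
    have dj := ih j hj hjn
    have htr : (0:ℝ) < t * r^j := by positivity
    have hyj : ‖y j‖ ≤ 2*t*r^j := by
      have h5 : y j = w j + (y j - w j) := by abel
      calc ‖y j‖ = ‖w j + (y j - w j)‖ := by rw [← h5]
        _ ≤ ‖w j‖ + ‖y j - w j‖ := norm_add_le _ _
        _ ≤ t * r^j + 1/2 * (t * r^j) := add_le_add (le_of_eq (hw_norm j)) dj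
        _ ≤ 2*t*r^j := by linarith
    have hyjr0 : ‖y j‖ ≤ r₀ := le_trans hyj (H1 j hjn)
    have hMLj := hML (y j) hyjr0
    have hpow : ‖y j‖^p ≤ (2*t*r^j)^p :=
      Real.rpow_le_rpow (norm_nonneg _) hyj hp0.le
    have hconv : (2*t*r^j)^p = (2*t)^p * (r^p)^j := by
      rw [Real.mul_rpow (by positivity) (by positivity)]
      congr 1
      rw [← Real.rpow_natCast r j, ← Real.rpow_mul hr0.le, mul_comm,
        Real.rpow_mul hr0.le, Real.rpow_natCast]
    have hsm : ‖(μ^j * (t:ℂ)) • (L x - μ • x)‖ ≤ t * r^j * δ := by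
      rw [norm_smul, norm_mul, norm_pow]
      rw [Complex.norm_real, Real.norm_eq_abs, abs_of_pos ht]
      calc r^j * t * ‖L x - μ • x‖ ≤ r^j * t * δ := by
            apply mul_le_mul_of_nonneg_left hxe (by positivity)
        _ = t * r^j * δ := by ring
    calc ‖E j‖ ≤ ‖M (y j) - L (y j)‖ + ‖(μ^j * (t:ℂ)) • (L x - μ • x)‖ := norm_add_le _ _
      _ ≤ C * ‖y j‖^p + t * r^j * δ := add_le_add hMLj hsm
      _ ≤ C * ((2*t)^p * (r^p)^j) + t * r^j * δ := by
          have := Real.rpow_le_rpow (norm_nonneg (y j)) hyj hp0.le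
          rw [← hconv]
          exact add_le_add_left (mul_le_mul_of_nonneg_left hpow hC.le) _
  -- geometric sums
  have g1 : (∑ j ∈ Finset.range k, r^j * b^(k-1-j)) ≤ b^k / (b - r) := by
    have h := geom_sum₂_mul r b k
    have heq : (∑ j ∈ Finset.range k, r^j * b^(k-1-j)) = (b^k - r^k)/(b - r) := by
      rw [eq_div_iff (ne_of_gt hbr')]
      linear_combination -h
    rw [heq]
    have h6 : b^k - r^k ≤ b^k := by
      have : (0:ℝ) ≤ r^k := by positivity
      linarith
    exact div_le_div_of_nonneg_right h6 hbr'.le |>.trans_eq rfl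
  have g2 : (∑ j ∈ Finset.range k, (r^p)^j * b^(k-1-j)) ≤ (r^p)^k / (r^p - b) := by
    have h := geom_sum₂_mul (r^p) b k
    have heq : (∑ j ∈ Finset.range k, (r^p)^j * b^(k-1-j)) = ((r^p)^k - b^k)/(r^p - b) := by
      rw [eq_div_iff (ne_of_gt hrpb)]
      linear_combination h
    rw [heq]
    have h6 : (r^p)^k - b^k ≤ (r^p)^k := by
      have : (0:ℝ) ≤ b^k := by positivity
      linarith
    exact div_le_div_of_nonneg_right h6 hrpb.le |>.trans_eq rfl
  have e1 : (Cb*C*(2*t)^p) * ((r^p)^k/(r^p - b)) ≤ t*r^k/4 := by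
    rw [← mul_div_assoc, div_le_iff₀ hrpb]
    calc Cb*C*(2*t)^p*(r^p)^k ≤ (r^p - b)/4 * (t*r^k) := by
          have := H3 k hk
          linarith
      _ = t*r^k/4*(r^p - b) := by ring
  have e2 : (Cb*t*δ) * (b^k/(b - r)) ≤ t*r^k/4 := by
    rw [← mul_div_assoc, div_le_iff₀ hbr']
    have h2' := mul_le_mul_of_nonneg_left (H2 k hk) ht.le
    calc Cb*t*δ*b^k = t * (Cb*δ*b^k) := by ring
      _ ≤ t * ((b - r)/4 * r^k) := h2'
      _ = t*r^k/4*(b - r) := by ring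
  calc ‖y k - w k‖ = ‖(Finset.range k).sum (fun j => (L^(k-1-j)) (E j))‖ := by rw [hiter k]
    _ ≤ ∑ j ∈ Finset.range k, ‖(L^(k-1-j)) (E j)‖ := norm_sum_le _ _
    _ ≤ ∑ j ∈ Finset.range k,
        ((Cb*C*(2*t)^p) * ((r^p)^j * b^(k-1-j)) + (Cb*t*δ) * (r^j * b^(k-1-j))) := by
        apply Finset.sum_le_sum
        intro j hj
        have hj' : j < k := Finset.mem_range.mp hj
        calc ‖(L^(k-1-j)) (E j)‖ ≤ ‖L^(k-1-j)‖ * ‖E j‖ := ContinuousLinearMap.le_opNorm _ _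
          _ ≤ (Cb * b^(k-1-j)) * (C * ((2*t)^p * (r^p)^j) + t * r^j * δ) := by
              apply mul_le_mul (hCb _) (hEbound j hj') (norm_nonneg _) (by positivity)
          _ = (Cb*C*(2*t)^p) * ((r^p)^j * b^(k-1-j)) + (Cb*t*δ) * (r^j * b^(k-1-j)) := by
              ring
    _ = (Cb*C*(2*t)^p) * (∑ j ∈ Finset.range k, (r^p)^j * b^(k-1-j))
        + (Cb*t*δ) * (∑ j ∈ Finset.range k, r^j * b^(k-1-j)) := by
        rw [Finset.sum_add_distrib, ← Finset.mul_sum, ← Finset.mul_sum]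
    _ ≤ (Cb*C*(2*t)^p) * ((r^p)^k/(r^p - b)) + (Cb*t*δ) * (b^k/(b - r)) := by
        apply add_le_add (mul_le_mul_of_nonneg_left g2 (by positivity))
          (mul_le_mul_of_nonneg_left g1 (by positivity))
    _ ≤ t*r^k/4 + t*r^k/4 := add_le_add e1 e2
    _ = 1/2 * (t * r^k) := by ring
end HPWAux

set_option maxHeartbeats 1000000 in
/-- **Henry–Perez–Wreszinski instability theorem.** If `M : Y → Y` fixes the origin and
is approximated near `0` to order `p > 1` by a continuous linear operator `L` with
spectral radius greater than one, then `0` is an unstable fixed point of `M`. -/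
theorem henry_perez_wreszinski_instability
    {Y : Type*} [NormedAddCommGroup Y] [NormedSpace ℂ Y] [CompleteSpace Y] [Nontrivial Y]
    (M : Y → Y) (hM0 : M 0 = 0) (L : Y →L[ℂ] Y) (hrad : 1 < spectralRadius ℂ L)
    (p C r₀ : ℝ) (hp : 1 < p) (hC : 0 < C) (hr₀ : 0 < r₀)
    (hML : ∀ y : Y, ‖y‖ ≤ r₀ → ‖M y - L y‖ ≤ C * ‖y‖ ^ p) :
    ∃ ε₀ > (0 : ℝ), ∀ η > (0 : ℝ), ∀ N₀ : ℕ,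
      ∃ n ≥ N₀, ∃ y : Y, ‖y‖ < η ∧ ε₀ ≤ ‖M^[n] y‖ := by
  -- maximal modulus spectral point
  obtain ⟨μ, hμ, hmax'⟩ := (spectrum.isCompact L).exists_isMaxOn (spectrum.nonempty L)
    continuous_norm.continuousOn
  have hmax : ∀ z ∈ spectrum ℂ L, ‖z‖ ≤ ‖μ‖ := hmax'
  have hradle : spectralRadius ℂ L ≤ (‖μ‖₊ : ℝ≥0∞) := by
    rw [spectralRadius]
    exact iSup₂_le fun k hk => by exact_mod_cast ENNReal.coe_le_coe.mpr (by exact_mod_cast hmax k hk)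
  have hr1 : 1 < ‖μ‖ := by
    have h := lt_of_lt_of_le hrad hradle
    have : (1:ℝ≥0) < ‖μ‖₊ := by exact_mod_cast h
    exact_mod_cast this
  set r : ℝ := ‖μ‖ with hrdef
  have hr0 : (0:ℝ) < r := lt_trans one_pos hr1
  have hp0 : (0:ℝ) < p := lt_trans one_pos hp
  have hp1 : (0:ℝ) < p - 1 := by linarith
  have hrrp : r < r ^ p := by
    nth_rewrite 1 [← Real.rpow_one r]
    exact Real.rpow_lt_rpow_of_exponent_lt hr1 hp
  set b : ℝ := (r + r^p)/2 with hbdef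
  have hbr : r < b := by rw [hbdef]; linarith
  have hbrp : b < r ^ p := by rw [hbdef]; linarith
  have hb0 : (0:ℝ) < b := lt_trans hr0 hbr
  have hb1 : (1:ℝ) ≤ b := by linarith
  have hbr' : (0:ℝ) < b - r := by linarith
  have hrpb : (0:ℝ) < r^p - b := by linarith
  -- growth bound
  have hradb : spectralRadius ℂ L < ENNReal.ofReal b := by
    calc spectralRadius ℂ L ≤ (‖μ‖₊ : ℝ≥0∞) := hradle
      _ = ENNReal.ofReal r := (ofReal_norm μ).symm
      _ < ENNReal.ofReal b := (ENNReal.ofReal_lt_ofReal_iff hb0).mpr hbr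
  obtain ⟨Cb, hCb1, hCb⟩ := growth_bound L b hb1 hradb
  have hCb0 : (0:ℝ) < Cb := lt_of_lt_of_le one_pos hCb1
  -- the small scale s and ε₀
  set D : ℝ := Cb * C * 2^p with hDdef
  have hD0 : (0:ℝ) < D := by
    rw [hDdef]
    have : (0:ℝ) < (2:ℝ)^p := Real.rpow_pos_of_pos two_pos p
    positivity
  set X : ℝ := (r^p - b)/(4*D) with hXdef
  have hX0 : (0:ℝ) < X := by rw [hXdef]; positivity
  set s : ℝ := min (r₀/2) (X ^ (1/(p-1))) with hsdef
  have hs0 : (0:ℝ) < s := by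
    rw [hsdef]
    exact lt_min (by linarith) (Real.rpow_pos_of_pos hX0 _)
  have hsX : s ^ (p-1) ≤ X := by
    calc s ^ (p-1) ≤ (X ^ (1/(p-1))) ^ (p-1) :=
          Real.rpow_le_rpow hs0.le (min_le_right _ _) (by linarith)
      _ = X ^ ((1/(p-1)) * (p-1)) := (Real.rpow_mul hX0.le _ _).symm
      _ = X := by rw [one_div, inv_mul_cancel₀ (ne_of_gt hp1), Real.rpow_one]
  refine ⟨s/2, by positivity, ?_⟩
  intro η hη N₀
  -- pick n
  obtain ⟨n₁, hn₁⟩ := pow_unbounded_of_one_lt (s/η) hr1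
  set n : ℕ := max N₀ n₁ with hndef
  have hnN₀ : N₀ ≤ n := le_max_left _ _
  have hrn : s/η < r ^ n :=
    lt_of_lt_of_le hn₁ (pow_le_pow_right₀ hr1.le (le_max_right _ _))
  have hrn0 : (0:ℝ) < r ^ n := pow_pos hr0 n
  set t : ℝ := s / r ^ n with htdef
  have ht : 0 < t := by positivity
  have htrn : t * r ^ n = s := by rw [htdef]; field_simp
  have htη : t < η := by
    rw [htdef, div_lt_iff₀ hrn0]
    calc s = (s/η) * η := by field_simp
      _ < r^n * η := by exact mul_lt_mul_of_pos_right hrn hη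
      _ = η * r^n := by ring
  -- pick δ and the approximate eigenvector
  set δ : ℝ := (b - r) * r^n / (4 * (Cb * b^n)) with hδdef
  have hδ0 : 0 < δ := by
    rw [hδdef]
    have h1 : (0:ℝ) < b^n := pow_pos hb0 n
    positivity
  obtain ⟨x, hx1, hxe⟩ := approx_eig L μ hμ hmax hr1 δ hδ0
  -- the three hypotheses
  have H1 : ∀ k ≤ n, 2 * t * r^k ≤ r₀ := by
    intro k hk
    have h1 : t * r^k ≤ t * r^n :=
      mul_le_mul_of_nonneg_left (pow_le_pow_right₀ hr1.le hk) ht.le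
    have h2 : s ≤ r₀/2 := min_le_left _ _
    rw [htrn] at h1
    linarith
  have H2 : ∀ k ≤ n, Cb * δ * b^k ≤ (b - r)/4 * r^k := by
    intro k hk
    have hbk0 : (0:ℝ) < b^k := pow_pos hb0 k
    have hbn0 : (0:ℝ) < b^n := pow_pos hb0 n
    have hrbk : r^n * b^k ≤ r^k * b^n := by
      have h1 : r^(n-k) ≤ b^(n-k) := pow_le_pow_left₀ hr0.le hbr.le _
      have h2 : r^n = r^k * r^(n-k) := by rw [← pow_add]; congr 1; omega
      have h3 : b^n = b^k * b^(n-k) := by rw [← pow_add]; congr 1; omega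
      rw [h2, h3]
      have h4 : (0:ℝ) ≤ r^k := by positivity
      have h5 : (0:ℝ) ≤ r^(n-k) := by positivity
      have h6 : (0:ℝ) ≤ b^k := by positivity
      calc r^k * r^(n-k) * b^k ≤ r^k * b^(n-k) * b^k :=
            mul_le_mul_of_nonneg_right (mul_le_mul_of_nonneg_left h1 h4) h6
        _ = r^k * (b^k * b^(n-k)) := by ring
    have heq : Cb * δ * b^k = (b - r) * (r^n * b^k) / (4 * b^n) := by
      rw [hδdef]; field_simp
    rw [heq]
    calc (b - r) * (r^n * b^k) / (4 * b^n) ≤ (b - r) * (r^k * b^n) / (4 * b^n) := by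
          apply div_le_div_of_nonneg_right _ (by positivity)
          exact mul_le_mul_of_nonneg_left hrbk hbr'.le
      _ = (b - r)/4 * r^k := by field_simp
  have H3 : ∀ k ≤ n, Cb * C * (2*t)^p * (r^p)^k ≤ (r^p - b)/4 * (t * r^k) := by
    intro k hk
    have htrk : (0:ℝ) < t * r^k := by positivity
    have htrk_le : t * r^k ≤ s := by
      rw [← htrn]
      exact mul_le_mul_of_nonneg_left (pow_le_pow_right₀ hr1.le hk) ht.le
    have h2t : (2*t)^p = 2^p * t^p := Real.mul_rpow (by norm_num) ht.le
    have hconv : (r^k : ℝ)^p = (r^p)^k := by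
      rw [← Real.rpow_natCast r k, ← Real.rpow_mul hr0.le, mul_comm,
        Real.rpow_mul hr0.le, Real.rpow_natCast]
    have hsplit : (t * r^k)^p = (t*r^k)^(p-1) * (t*r^k) := by
      nth_rewrite 1 [show p = (p-1) + 1 by ring]
      rw [Real.rpow_add htrk, Real.rpow_one]
    have hmono : (t*r^k)^(p-1) ≤ s^(p-1) :=
      Real.rpow_le_rpow htrk.le htrk_le (by linarith)
    have hDX : D * X = (r^p - b)/4 := by
      rw [hXdef]; field_simp
    have hfin : D * (t*r^k)^(p-1) ≤ (r^p - b)/4 := by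
      calc D * (t*r^k)^(p-1) ≤ D * s^(p-1) := mul_le_mul_of_nonneg_left hmono hD0.le
        _ ≤ D * X := mul_le_mul_of_nonneg_left hsX hD0.le
        _ = (r^p - b)/4 := hDX
    calc Cb * C * (2*t)^p * (r^p)^k = D * (t^p * (r^p)^k) := by
          rw [h2t, hDdef]; ring
      _ = D * ((t * r^k)^p) := by
          rw [Real.mul_rpow ht.le (by positivity), hconv]
      _ = (D * (t*r^k)^(p-1)) * (t*r^k) := by rw [hsplit]; ring
      _ ≤ (r^p - b)/4 * (t*r^k) := mul_le_mul_of_nonneg_right hfin htrk.le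
  -- apply the main estimate at k = n
  have hmain := orbit_close M L p C r₀ hp hC hr₀ hML μ hr1 b Cb hbr hbrp hCb1 hCb
    x hx1 δ hδ0 hxe t ht n H1 H2 H3 n le_rfl
  refine ⟨n, hnN₀, (t:ℂ) • x, ?_, ?_⟩
  · rw [norm_smul, hx1, mul_one, Complex.norm_real, Real.norm_eq_abs, abs_of_pos ht]
    exact htη
  · have hwn : ‖(μ^n * (t:ℂ)) • x‖ = t * r^n := by
      rw [norm_smul, hx1, mul_one, norm_mul, norm_pow,
        Complex.norm_real, Real.norm_eq_abs, abs_of_pos ht]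
      ring
    have h7 : ‖(μ^n * (t:ℂ)) • x‖ - ‖M^[n] ((t:ℂ) • x) - (μ^n * t) • x‖ ≤ ‖M^[n] ((t:ℂ) • x)‖ := by
      have := norm_sub_norm_le ((μ^n * (t:ℂ)) • x) ((μ^n * (t:ℂ)) • x - M^[n] ((t:ℂ) • x))
      have heq : (μ^n * (t:ℂ)) • x - ((μ^n * (t:ℂ)) • x - M^[n] ((t:ℂ) • x)) = M^[n] ((t:ℂ) • x) := by abel
      rw [heq, norm_sub_rev] at this
      exact this
    rw [hwn, htrn] at h7
    rw [htrn] at hmain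
    linarith
end

section
/- Let Y be a nontrivial complex Banach space, Ω ⊆ Y an open set, φ ∈ Ω, and S : Y → Y a map which is twice continuously (Fréchet) differentiable on Ω (ContDiffOn ℂ 2 S Ω) with S φ = φ. If there exists μ ∈ spectrum ℂ (fderiv ℂ S φ) with ‖μ‖ > 1, then φ is an unstable fixed point of S: there exists ε₀ > 0 such that for every δ > 0 there exist y ∈ Y with ‖y − φ‖ < δ and n ∈ ℕ with ‖S^[n] y − φ‖ ≥ ε₀. -/
open Metric Set

/-- If `S` is a `C²` map on an open neighborhood of a fixed point `φ` and the Fréchet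
derivative of `S` at `φ` has a spectral element `μ` with `‖μ‖ > 1`, then `φ` is an
unstable fixed point of `S`. -/
theorem instability_of_fixed_point_of_spectral_instability
    {Y : Type*} [NormedAddCommGroup Y] [NormedSpace ℂ Y] [CompleteSpace Y] [Nontrivial Y]
    (Ω : Set Y) (hΩ : IsOpen Ω) (φ : Y) (hφ : φ ∈ Ω)
    (S : Y → Y) (hS : ContDiffOn ℂ 2 S Ω) (hfix : S φ = φ)
    (μ : ℂ) (hμ : μ ∈ spectrum ℂ (fderiv ℂ S φ)) (hμ1 : 1 < ‖μ‖) :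
    ∃ ε₀ > (0 : ℝ), ∀ δ > (0 : ℝ),
      ∃ y : Y, ‖y - φ‖ < δ ∧ ∃ n : ℕ, ε₀ ≤ ‖S^[n] y - φ‖ := by
  by_contra hcon
  push_neg at hcon
  set T := fderiv ℂ S φ with hTdef
  obtain ⟨r, hr, hball⟩ := Metric.isOpen_iff.mp hΩ φ hφ
  obtain ⟨δ, hδ, hstab⟩ := hcon r hr
  -- every iterate of a point of `ball φ δ` stays in `ball φ r ⊆ Ω`
  have hmem : ∀ y ∈ ball φ δ, ∀ n : ℕ, S^[n] y ∈ ball φ r := by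
    intro y hy n
    rw [mem_ball, dist_eq_norm]
    exact hstab y (by rwa [mem_ball, dist_eq_norm] at hy) n
  have hdiffS : DifferentiableOn ℂ S Ω := hS.differentiableOn (by norm_num)
  -- iterates are differentiable on `ball φ δ`
  have hdiff_iter : ∀ n : ℕ, DifferentiableOn ℂ (S^[n]) (ball φ δ) := by
    intro n
    induction n with
    | zero => simpa using differentiableOn_id
    | succ n ih =>
      rw [Function.iterate_succ']
      exact hdiffS.comp ih fun y hy => hball (hmem y hy n)
  have hfixn : ∀ n : ℕ, S^[n] φ = φ := fun n => Function.iterate_fixed hfix n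
  have hT : HasFDerivAt S T φ :=
    (hdiffS.differentiableAt (hΩ.mem_nhds hφ)).hasFDerivAt
  -- derivative of the iterate at the fixed point
  have hTn : ∀ n : ℕ, HasFDerivAt (S^[n]) (T ^ n) φ := by
    intro n
    induction n with
    | zero => simp only [pow_zero, Function.iterate_zero]; exact hasFDerivAt_id φ
    | succ n ih =>
      rw [Function.iterate_succ']
      have hcomp : HasFDerivAt (S ∘ S^[n]) (T.comp (T ^ n)) φ := by
        refine HasFDerivAt.comp φ ?_ ih
        rw [hfixn n]; exact hT
      have : T ^ (n + 1) = T.comp (T ^ n) := by rw [pow_succ']; rfl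
      rwa [this]
  -- key bound on the powers of `T` via the Schwarz lemma
  have hbound : ∀ n : ℕ, ‖T ^ n‖ ≤ r / δ := by
    intro n
    refine ContinuousLinearMap.opNorm_le_bound _ (div_nonneg hr.le hδ.le) fun y => ?_
    rcases eq_or_ne y 0 with rfl | hy0
    · simp
    have hny : (0 : ℝ) < ‖y‖ := norm_pos_iff.mpr hy0
    set v : Y := ((‖y‖ : ℂ))⁻¹ • y with hv
    have hvnorm : ‖v‖ = 1 := by
      rw [hv, norm_smul, norm_inv, Complex.norm_real, Real.norm_eq_abs,
        abs_of_pos hny, inv_mul_cancel₀ hny.ne']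
    -- the slice function
    set f : ℂ → Y := fun z => S^[n] (φ + z • v) with hf
    have hL : ∀ z : ℂ, z ∈ ball (0 : ℂ) δ → φ + z • v ∈ ball φ δ := by
      intro z hz
      rw [mem_ball, dist_eq_norm, add_sub_cancel_left, norm_smul, hvnorm, mul_one]
      simpa [dist_eq_norm] using hz
    have hfd : DifferentiableOn ℂ f (ball (0 : ℂ) δ) := by
      refine (hdiff_iter n).comp ?_ hL
      exact (((differentiable_id ).smul_const v).const_add φ).differentiableOn
    have hf0 : f 0 = φ := by simp [hf, hfixn n]
    have hmaps : MapsTo f (ball (0 : ℂ) δ) (ball (f 0) r) := by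
      intro z hz
      rw [hf0]
      exact hmem _ (hL z hz) n
    have hschwarz : ‖deriv f 0‖ ≤ r / δ :=
      Complex.norm_deriv_le_div_of_mapsTo_ball hfd (hmaps.mono_right ball_subset_closedBall) hδ
    have hderiv : HasDerivAt f ((T ^ n) v) 0 := by
      have hLd : HasDerivAt (fun z : ℂ => φ + z • v) v 0 := by
        simpa using ((hasDerivAt_id (0 : ℂ)).smul_const v).const_add φ
      have hTn' : HasFDerivAt (S^[n]) (T ^ n) (φ + (0 : ℂ) • v) := by
        simpa using hTn n
      have := hTn'.comp_hasDerivAt (x := (0 : ℂ))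
        (f := fun z : ℂ => φ + z • v) hLd
      simpa [hf, Function.comp_def] using this
    have hTv : ‖(T ^ n) v‖ ≤ r / δ := by
      rw [← hderiv.deriv]; exact hschwarz
    -- rescale
    have hyv : ((‖y‖ : ℂ)) • v = y := by
      rw [hv, smul_smul, mul_inv_cancel₀ (by exact_mod_cast hny.ne'), one_smul]
    calc ‖(T ^ n) y‖ = ‖((‖y‖ : ℂ)) • (T ^ n) v‖ := by rw [← map_smul, hyv]
      _ = ‖y‖ * ‖(T ^ n) v‖ := by
          rw [norm_smul, Complex.norm_real, Real.norm_eq_abs, abs_of_pos hny]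
      _ ≤ ‖y‖ * (r / δ) := by exact mul_le_mul_of_nonneg_left hTv hny.le
      _ = r / δ * ‖y‖ := mul_comm _ _
  -- spectral contradiction
  obtain ⟨n, hn⟩ := pow_unbounded_of_one_lt (r / δ) hμ1
  have hμn : μ ^ n ∈ spectrum ℂ (T ^ n) :=
    spectrum.pow_image_subset T n ⟨μ, hμ, rfl⟩
  have := spectrum.norm_le_norm_of_mem hμn
  rw [norm_pow] at this
  exact absurd (this.trans (hbound n)) (not_le.mpr hn)
end

section
/- Fix L > 0 and δ ≥ 0. There exists a constant K > 0, depending only on δ and L, such that for every r ∈ ℝ, every t > 0, and every a : ℤ → ℂ with k ↦ (1+|k|²)^r·‖a k‖² summable over ℤ, the function k ↦ (1+|k|²)^{r+δ}·‖exp(−Q(k)·t)·a k‖² is summable and ∑'_{k∈ℤ} (1+|k|²)^{r+δ}·‖exp(−Q(k)·t)·a k‖² ≤ K²·(1 + (1/(2t))^δ)·∑'_{k∈ℤ} (1+|k|²)^r·‖a k‖². (This is the smoothing estimate ‖V(t)φ‖_{r+δ} ≤ K_δ·(1+(2t)^{-δ})^{1/2}·‖φ‖_r for the viscous–dispersive semigroup.)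 -/
open scoped Real

/-- Fourier symbol of the viscous–dispersive operator `∂ₓ³ - ∂ₓ²` on `L`-periodic
functions: `Q(k) = (2π/L)²k² - i(2π/L)³k³`. -/
noncomputable def Q (L : ℝ) (k : ℤ) : ℂ :=
  (((2 * π / L) ^ 2 * (k : ℝ) ^ 2 : ℝ) : ℂ) -
    Complex.I * (((2 * π / L) ^ 3 * (k : ℝ) ^ 3 : ℝ) : ℂ)

-- y^δ e^{-y} ≤ ⌈δ⌉!
lemma rpow_mul_exp_neg_le (δ : ℝ) (hδ : 0 ≤ δ) (y : ℝ) (hy : 0 ≤ y) :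
    y ^ δ * Real.exp (-y) ≤ Nat.factorial (Nat.ceil δ) := by
  have h1 : (1 : ℝ) ≤ Nat.factorial (Nat.ceil δ) := by exact_mod_cast Nat.one_le_iff_ne_zero.mpr (Nat.factorial_ne_zero _)
  rcases le_or_gt y 1 with hy1 | hy1
  · have h2 : Real.exp (-y) ≤ 1 := Real.exp_le_one_iff.mpr (by linarith)
    calc y ^ δ * Real.exp (-y) ≤ 1 :=
          mul_le_one₀ (Real.rpow_le_one hy hy1 hδ) (Real.exp_nonneg _) h2
      _ ≤ _ := h1
  · have hyn : y ^ δ ≤ y ^ (Nat.ceil δ : ℕ) := by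
      rw [← Real.rpow_natCast y (Nat.ceil δ)]
      exact Real.rpow_le_rpow_of_exponent_le hy1.le (Nat.le_ceil δ)
    have h2 : y ^ (Nat.ceil δ : ℕ) ≤ Nat.factorial (Nat.ceil δ) * Real.exp y := by
      have := Real.pow_div_factorial_le_exp y (le_of_lt (lt_of_le_of_lt zero_le_one hy1)) (Nat.ceil δ)
      have hf : (0 : ℝ) < Nat.factorial (Nat.ceil δ) := by positivity
      rw [div_le_iff₀ hf] at this
      linarith [this]
    calc y ^ δ * Real.exp (-y) ≤ y ^ (Nat.ceil δ : ℕ) * Real.exp (-y) := by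
          exact mul_le_mul_of_nonneg_right hyn (Real.exp_nonneg _)
      _ ≤ (Nat.factorial (Nat.ceil δ) * Real.exp y) * Real.exp (-y) := by
          exact mul_le_mul_of_nonneg_right h2 (Real.exp_nonneg _)
      _ = Nat.factorial (Nat.ceil δ) := by rw [mul_assoc, ← Real.exp_add]; simp

/-- Smoothing estimate for the viscous–dispersive semigroup:
`‖V(t)φ‖_{r+δ} ≤ K_δ (1 + (2t)^{-δ})^{1/2} ‖φ‖_r` for all `t > 0`. -/
theorem semigroup_smoothing_estimate (L : ℝ) (hL : 0 < L) (δ : ℝ) (hδ : 0 ≤ δ) :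
    ∃ K > (0 : ℝ), ∀ r : ℝ, ∀ t : ℝ, 0 < t → ∀ a : ℤ → ℂ,
      Summable (fun k : ℤ => (1 + |(k : ℝ)| ^ 2) ^ r * ‖a k‖ ^ 2) →
      Summable (fun k : ℤ =>
        (1 + |(k : ℝ)| ^ 2) ^ (r + δ) * ‖Complex.exp (-Q L k * (t : ℂ)) * a k‖ ^ 2) ∧
      ∑' k : ℤ, (1 + |(k : ℝ)| ^ 2) ^ (r + δ) *
          ‖Complex.exp (-Q L k * (t : ℂ)) * a k‖ ^ 2 ≤
        K ^ 2 * (1 + (1 / (2 * t)) ^ δ) *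
          ∑' k : ℤ, (1 + |(k : ℝ)| ^ 2) ^ r * ‖a k‖ ^ 2 := by
  set c : ℝ := (2 * π / L) ^ 2 with hc_def
  have hc : 0 < c := by positivity
  set M : ℝ := (Nat.factorial (Nat.ceil δ) : ℝ) * c ^ (-δ) with hM_def
  have hM : 0 < M := by positivity
  set B : ℝ := 2 ^ δ * (1 + M) with hB_def
  have hB : 0 < B := by positivity
  refine ⟨Real.sqrt B, Real.sqrt_pos.mpr hB, ?_⟩
  intro r t ht a ha
  have hKsq : (Real.sqrt B) ^ 2 = B := Real.sq_sqrt hB.le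
  -- key pointwise bound
  have key : ∀ k : ℤ,
      (1 + |(k : ℝ)| ^ 2) ^ (r + δ) * ‖Complex.exp (-Q L k * (t : ℂ)) * a k‖ ^ 2 ≤
      (B * (1 + (1 / (2 * t)) ^ δ)) * ((1 + |(k : ℝ)| ^ 2) ^ r * ‖a k‖ ^ 2) := by
    intro k
    set x : ℝ := |(k : ℝ)| ^ 2 with hx_def
    have hx : 0 ≤ x := by positivity
    have h1x : (0 : ℝ) < 1 + x := by linarith
    -- norm of the exponential
    have hQ : Q L k = ((c * x : ℝ) : ℂ) -
        Complex.I * ((((2 * π / L) ^ 3 * (k : ℝ) ^ 3) : ℝ) : ℂ) := by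
      rw [Q, hc_def, hx_def, sq_abs]
    have hre : (-Q L k * (t : ℂ)).re = -(c * x * t) := by
      rw [hQ]
      simp only [Complex.neg_re, Complex.neg_im, Complex.mul_re, Complex.mul_im,
        Complex.sub_re, Complex.sub_im, Complex.ofReal_re, Complex.ofReal_im,
        Complex.I_re, Complex.I_im]
      ring
    have hnorm : ‖Complex.exp (-Q L k * (t : ℂ))‖ = Real.exp (-(c * x * t)) := by
      rw [Complex.norm_exp, hre]
    have hexp2 : ‖Complex.exp (-Q L k * (t : ℂ))‖ ^ 2 = Real.exp (-(2 * (c * x * t))) := by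
      rw [hnorm, sq, ← Real.exp_add]; ring_nf
    -- the scalar bound
    have hy : 0 ≤ 2 * (c * x * t) := by positivity
    have hB1 : x ^ δ * Real.exp (-(2 * (c * x * t))) ≤ M * (1 / (2 * t)) ^ δ := by
      have h2ct : (0 : ℝ) < 2 * c * t := by positivity
      have hkey := rpow_mul_exp_neg_le δ hδ (2 * (c * x * t)) hy
      have hfac : (2 * (c * x * t)) ^ δ = (2 * c * t) ^ δ * x ^ δ := by
        rw [← Real.mul_rpow h2ct.le hx]; ring_nf
      rw [hfac] at hkey
      have hpos : (0 : ℝ) < (2 * c * t) ^ δ := Real.rpow_pos_of_pos h2ct δ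
      have : x ^ δ * Real.exp (-(2 * (c * x * t))) ≤ (Nat.factorial (Nat.ceil δ) : ℝ) / (2 * c * t) ^ δ := by
        rw [le_div_iff₀ hpos]
        calc x ^ δ * Real.exp (-(2 * (c * x * t))) * (2 * c * t) ^ δ
            = (2 * c * t) ^ δ * x ^ δ * Real.exp (-(2 * (c * x * t))) := by ring
          _ ≤ _ := hkey
      refine this.trans (le_of_eq ?_)
      rw [hM_def]
      have h2t : (2 * c * t) ^ δ = c ^ δ * (2 * t) ^ δ := by
        rw [← Real.mul_rpow hc.le (by positivity : (0:ℝ) ≤ 2 * t)]; ring_nf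
      rw [h2t, Real.rpow_neg hc.le, Real.div_rpow (by norm_num) (by positivity : (0:ℝ) ≤ 2*t),
        Real.one_rpow]
      field_simp
    have hB2 : (1 + x) ^ δ ≤ 2 ^ δ * (1 + x ^ δ) := by
      rcases le_or_gt x 1 with hx1 | hx1
      · have : (1 + x) ^ δ ≤ (2 : ℝ) ^ δ :=
          Real.rpow_le_rpow h1x.le (by linarith) hδ
        have hxδ : 0 ≤ x ^ δ := Real.rpow_nonneg hx δ
        nlinarith [Real.rpow_pos_of_pos (by norm_num : (0:ℝ) < 2) δ]
      · have : (1 + x) ^ δ ≤ (2 * x) ^ δ :=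
          Real.rpow_le_rpow h1x.le (by linarith) hδ
        rw [Real.mul_rpow (by norm_num) hx] at this
        nlinarith [Real.rpow_pos_of_pos (by norm_num : (0:ℝ) < 2) δ, Real.rpow_nonneg hx δ]
    -- combine
    have hmain : (1 + x) ^ δ * Real.exp (-(2 * (c * x * t))) ≤ B * (1 + (1 / (2 * t)) ^ δ) := by
      have hexple : Real.exp (-(2 * (c * x * t))) ≤ 1 := Real.exp_le_one_iff.mpr (by linarith)
      have hexpnn : 0 ≤ Real.exp (-(2 * (c * x * t))) := Real.exp_nonneg _
      have step : (1 + x) ^ δ * Real.exp (-(2 * (c * x * t))) ≤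
          2 ^ δ * (Real.exp (-(2 * (c * x * t))) + x ^ δ * Real.exp (-(2 * (c * x * t)))) := by
        have := mul_le_mul_of_nonneg_right hB2 hexpnn
        calc (1 + x) ^ δ * Real.exp (-(2 * (c * x * t)))
            ≤ 2 ^ δ * (1 + x ^ δ) * Real.exp (-(2 * (c * x * t))) := this
          _ = 2 ^ δ * (Real.exp (-(2 * (c * x * t))) + x ^ δ * Real.exp (-(2 * (c * x * t)))) := by ring
      refine step.trans ?_
      have h2δ : (0 : ℝ) < 2 ^ δ := Real.rpow_pos_of_pos (by norm_num) δ
      have hq : 0 ≤ (1 / (2 * t)) ^ δ := Real.rpow_nonneg (by positivity) δ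
      rw [hB_def]
      nlinarith [hB1, hexple, hM]
    -- finish per-term
    have hrw : (1 + x) ^ (r + δ) = (1 + x) ^ r * (1 + x) ^ δ := Real.rpow_add h1x r δ
    rw [norm_mul, mul_pow, hexp2, hrw]
    have hnn : 0 ≤ (1 + x) ^ r * ‖a k‖ ^ 2 := by positivity
    calc (1 + x) ^ r * (1 + x) ^ δ * (Real.exp (-(2 * (c * x * t))) * ‖a k‖ ^ 2)
        = ((1 + x) ^ δ * Real.exp (-(2 * (c * x * t)))) * ((1 + x) ^ r * ‖a k‖ ^ 2) := by ring
      _ ≤ (B * (1 + (1 / (2 * t)) ^ δ)) * ((1 + x) ^ r * ‖a k‖ ^ 2) :=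
          mul_le_mul_of_nonneg_right hmain hnn
  have hsum2 : Summable (fun k : ℤ =>
      (B * (1 + (1 / (2 * t)) ^ δ)) * ((1 + |(k : ℝ)| ^ 2) ^ r * ‖a k‖ ^ 2)) := ha.mul_left _
  have hnn : ∀ k : ℤ, 0 ≤ (1 + |(k : ℝ)| ^ 2) ^ (r + δ) * ‖Complex.exp (-Q L k * (t : ℂ)) * a k‖ ^ 2 :=
    fun k => by positivity
  have hsum1 : Summable (fun k : ℤ =>
      (1 + |(k : ℝ)| ^ 2) ^ (r + δ) * ‖Complex.exp (-Q L k * (t : ℂ)) * a k‖ ^ 2) :=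
    Summable.of_nonneg_of_le hnn key hsum2
  refine ⟨hsum1, ?_⟩
  calc ∑' k : ℤ, (1 + |(k : ℝ)| ^ 2) ^ (r + δ) * ‖Complex.exp (-Q L k * (t : ℂ)) * a k‖ ^ 2
      ≤ ∑' k : ℤ, (B * (1 + (1 / (2 * t)) ^ δ)) * ((1 + |(k : ℝ)| ^ 2) ^ r * ‖a k‖ ^ 2) :=
        Summable.tsum_le_tsum key hsum1 hsum2
    _ = (B * (1 + (1 / (2 * t)) ^ δ)) * ∑' k : ℤ, (1 + |(k : ℝ)| ^ 2) ^ r * ‖a k‖ ^ 2 :=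
        tsum_mul_left
    _ = (Real.sqrt B) ^ 2 * (1 + (1 / (2 * t)) ^ δ) * ∑' k : ℤ, (1 + |(k : ℝ)| ^ 2) ^ r * ‖a k‖ ^ 2 := by
        rw [hKsq]
end

section
/- Fix L > 0, δ ≥ 0, α ∈ [0,1] and ε > 0. There exists a constant K > 0, depending only on δ, α, ε and L, such that for every r ∈ ℝ, all t, τ ≥ ε, and every a : ℤ → ℂ with k ↦ (1+|k|²)^r·‖a k‖² summable over ℤ, one has ∑'_{k∈ℤ} (1+|k|²)^{r+δ}·‖(exp(−Q(k)·t) − exp(−Q(k)·τ))·a k‖² ≤ K²·|t − τ|^{2α}·∑'_{k∈ℤ} (1+|k|²)^r·‖a k‖². (This is the Hölder continuity estimate ‖V(t)φ − V(τ)φ‖_{r+δ} ≤ K·|t−τ|^α·‖φ‖_r for the viscous–dispersive semigroup, valid for t, τ bounded away from 0.) -/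
open scoped Real

lemma Q_re (L : ℝ) (k : ℤ) (s : ℝ) :
    (-Q L k * (s : ℂ)).re = -((2 * π / L) ^ 2 * (k : ℝ) ^ 2 * s) := by
  simp only [Q, Complex.neg_re, Complex.mul_re, Complex.sub_re, Complex.sub_im,
    Complex.ofReal_re, Complex.ofReal_im, Complex.mul_im, Complex.I_re, Complex.I_im]
  ring

lemma Q_normSq (L : ℝ) (k : ℤ) :
    ‖Q L k‖ ^ 2 = ((2 * π / L) ^ 2 * (k : ℝ) ^ 2) ^ 2 + ((2 * π / L) ^ 3 * (k : ℝ) ^ 3) ^ 2 := by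
  rw [Complex.sq_norm, Complex.normSq_apply]
  simp only [Q, Complex.sub_re, Complex.sub_im, Complex.ofReal_re, Complex.ofReal_im,
    Complex.mul_re, Complex.mul_im, Complex.I_re, Complex.I_im]
  ring

lemma min_le_rpow (x α : ℝ) (hx : 0 ≤ x) (hα0 : 0 ≤ α) (hα1 : α ≤ 1) :
    min 1 x ≤ x ^ α := by
  rcases le_or_gt x 1 with h | h
  · rcases eq_or_lt_of_le hx with h0 | h0
    · simp [← h0]
      positivity
    · calc min 1 x ≤ x := min_le_right _ _
        _ = x ^ (1:ℝ) := (Real.rpow_one x).symm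
        _ ≤ x ^ α := Real.rpow_le_rpow_of_exponent_ge h0 h hα1
  · calc min 1 x ≤ 1 := min_le_left _ _
      _ ≤ x ^ α := Real.one_le_rpow h.le hα0

lemma pow_mul_exp_neg_le (n : ℕ) (hn : n ≠ 0) (x : ℝ) (hx : 0 ≤ x) :
    x ^ n * Real.exp (-x) ≤ (n : ℝ) ^ n := by
  have hnp : (0:ℝ) < (n:ℝ) := by exact_mod_cast Nat.pos_of_ne_zero hn
  have h1 : x / n ≤ Real.exp (x / n) := by
    have := Real.add_one_le_exp (x / n)
    have h0 : 0 ≤ x / n := div_nonneg hx hnp.le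
    linarith
  have h2 : (x / n) ^ n ≤ Real.exp x := by
    calc (x / n) ^ n ≤ (Real.exp (x / n)) ^ n :=
          pow_le_pow_left₀ (div_nonneg hx hnp.le) h1 n
      _ = Real.exp x := by
          rw [← Real.exp_nat_mul]; congr 1; field_simp
  have hx2 : x ^ n ≤ (n:ℝ) ^ n * Real.exp x := by
    have hxn : x ^ n = (x / n) ^ n * (n:ℝ) ^ n := by
      rw [div_pow, div_mul_cancel₀]
      positivity
    rw [hxn]
    calc (x / n) ^ n * (n:ℝ)^n ≤ Real.exp x * (n:ℝ)^n :=
          mul_le_mul_of_nonneg_right h2 (by positivity)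
      _ = (n:ℝ)^n * Real.exp x := by ring
  calc x ^ n * Real.exp (-x) ≤ (n:ℝ)^n * Real.exp x * Real.exp (-x) :=
        mul_le_mul_of_nonneg_right hx2 (Real.exp_pos _).le
    _ = (n:ℝ)^n := by rw [mul_assoc, ← Real.exp_add, add_neg_cancel, Real.exp_zero, mul_one]

lemma sq_rpow' (y : ℝ) (hy : 0 ≤ y) (α : ℝ) : (y ^ 2) ^ α = y ^ (2 * α) := by
  rw [← Real.rpow_natCast y 2, ← Real.rpow_mul hy]
  norm_num

lemma cube_rpow' (y : ℝ) (hy : 0 ≤ y) (α : ℝ) : (y ^ 3) ^ α = y ^ (3 * α) := by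
  rw [← Real.rpow_natCast y 3, ← Real.rpow_mul hy]
  norm_num

lemma rpow_two_comm (y : ℝ) (hy : 0 ≤ y) (α : ℝ) : (y ^ α) ^ 2 = (y ^ 2) ^ α := by
  rw [← Real.rpow_natCast (y ^ α) 2, ← Real.rpow_natCast y 2, ← Real.rpow_mul hy,
    ← Real.rpow_mul hy, mul_comm]

lemma diff_bound (L : ℝ) (k : ℤ) (α ε t τ : ℝ) (hα0 : 0 ≤ α) (hα1 : α ≤ 1)
    (hε : 0 < ε) (ht : ε ≤ t) (hτ : ε ≤ τ) (htτ : t ≤ τ) :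
    ‖Complex.exp (-Q L k * (t : ℂ)) - Complex.exp (-Q L k * (τ : ℂ))‖ ≤
      Real.exp (-((2 * π / L) ^ 2 * (k : ℝ) ^ 2 * ε)) * (2 * (‖Q L k‖ * (τ - t)) ^ α) := by
  set μ : ℝ := (2 * π / L) ^ 2 * (k : ℝ) ^ 2 with hμ
  have hμ0 : 0 ≤ μ := by positivity
  set s : ℝ := τ - t with hs
  have hs0 : 0 ≤ s := by simp [hs]; linarith
  have hsplit : Complex.exp (-Q L k * (τ : ℂ)) =
      Complex.exp (-Q L k * (t : ℂ)) * Complex.exp (-Q L k * ((s : ℝ) : ℂ)) := by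
    rw [← Complex.exp_add]
    congr 1
    push_cast [hs]
    ring
  have hfac : Complex.exp (-Q L k * (t : ℂ)) - Complex.exp (-Q L k * (τ : ℂ)) =
      Complex.exp (-Q L k * (t : ℂ)) * (1 - Complex.exp (-Q L k * ((s : ℝ) : ℂ))) := by
    rw [hsplit]; ring
  rw [hfac, norm_mul]
  have hb1 : ‖Complex.exp (-Q L k * (t : ℂ))‖ ≤ Real.exp (-(μ * ε)) := by
    rw [Complex.norm_exp, Q_re]
    apply Real.exp_le_exp.mpr
    have := mul_le_mul_of_nonneg_left ht hμ0
    rw [hμ] at this ⊢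
    linarith
  have hexpnorm : ‖Complex.exp (-Q L k * ((s : ℝ) : ℂ))‖ ≤ 1 := by
    rw [Complex.norm_exp, Q_re]
    rw [Real.exp_le_one_iff]
    have : 0 ≤ μ * s := mul_nonneg hμ0 hs0
    rw [hμ] at this
    linarith
  have hb2 : ‖1 - Complex.exp (-Q L k * ((s : ℝ) : ℂ))‖ ≤ 2 * min 1 (‖Q L k‖ * s) := by
    have hnrm : ‖-Q L k * ((s : ℝ) : ℂ)‖ = ‖Q L k‖ * s := by
      rw [norm_mul, norm_neg, Complex.norm_real, Real.norm_eq_abs, abs_of_nonneg hs0]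
    rcases le_or_gt (‖Q L k‖ * s) 1 with h | h
    · rw [min_eq_right h, norm_sub_rev]
      have := Complex.norm_exp_sub_one_le (x := -Q L k * ((s : ℝ) : ℂ))
        (by rw [hnrm]; exact h)
      rw [hnrm] at this
      exact this
    · rw [min_eq_left h.le]
      calc ‖1 - Complex.exp (-Q L k * ((s : ℝ) : ℂ))‖
          ≤ ‖(1 : ℂ)‖ + ‖Complex.exp (-Q L k * ((s : ℝ) : ℂ))‖ := norm_sub_le _ _
        _ ≤ 1 + 1 := by rw [norm_one]; linarith
        _ = 2 * 1 := by ring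
  have hb3 : 2 * min 1 (‖Q L k‖ * s) ≤ 2 * (‖Q L k‖ * s) ^ α := by
    have := min_le_rpow (‖Q L k‖ * s) α (by positivity) hα0 hα1
    linarith
  exact mul_le_mul hb1 (hb2.trans hb3) (norm_nonneg _) (Real.exp_pos _).le

/-- auxiliary constant -/
noncomputable def Mconst (L : ℝ) : ℝ := max 1 (((2*π/L)^2)^2 + ((2*π/L)^3)^2)

/-- auxiliary constant -/
noncomputable def Bconst (L δ ε : ℝ) : ℝ :=
  max 1 ((2:ℝ)^(⌈δ⌉₊+3) * ((⌈δ⌉₊+3 : ℕ):ℝ)^(⌈δ⌉₊+3) / (2*(2*π/L)^2*ε)^(⌈δ⌉₊+3))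

lemma key_bound (L : ℝ) (hL : 0 < L) (δ α ε : ℝ) (hδ : 0 ≤ δ) (hα0 : 0 ≤ α) (hα1 : α ≤ 1)
    (hε : 0 < ε) (k : ℤ) (t τ : ℝ) (ht : ε ≤ t) (hτ : ε ≤ τ) (htτ : t ≤ τ) :
    (1 + (k:ℝ) ^ 2) ^ δ *
      ‖Complex.exp (-Q L k * (t : ℂ)) - Complex.exp (-Q L k * (τ : ℂ))‖ ^ 2 ≤
    (4 * Mconst L * Bconst L δ ε) * (τ - t) ^ (2 * α) := by
  have hπL : 0 < 2 * π / L := by positivity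
  set c2 : ℝ := (2 * π / L) ^ 2 with hc2
  set c3 : ℝ := (2 * π / L) ^ 3 with hc3
  have hc2p : 0 < c2 := by rw [hc2]; positivity
  set x : ℝ := (k : ℝ) with hx
  set N : ℕ := ⌈δ⌉₊ + 3 with hN
  have hNne : N ≠ 0 := by omega
  set s : ℝ := τ - t with hs
  have hs0 : 0 ≤ s := by rw [hs]; linarith
  have hP0 : (0:ℝ) < 1 + x ^ 2 := by positivity
  have hP1 : (1:ℝ) ≤ 1 + x ^ 2 := by nlinarith [sq_nonneg x]
  -- bound on ‖Q‖²
  have hQsq : ‖Q L k‖ ^ 2 ≤ (c2^2 + c3^2) * (1 + x^2)^3 := by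
    rw [Q_normSq, ← hc2, ← hc3, ← hx]
    have hx4 : x^4 ≤ (1+x^2)^3 := by nlinarith [sq_nonneg x, sq_nonneg (x^2), sq_nonneg (x^3)]
    have hx6 : x^6 ≤ (1+x^2)^3 := by nlinarith [sq_nonneg x, sq_nonneg (x^2), sq_nonneg (x^3)]
    have h1 : (c2 * x^2)^2 = c2^2 * x^4 := by ring
    have h2 : (c3 * x^3)^2 = c3^2 * x^6 := by ring
    rw [h1, h2]
    nlinarith [sq_nonneg c2, sq_nonneg c3, mul_le_mul_of_nonneg_left hx4 (sq_nonneg c2),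
      mul_le_mul_of_nonneg_left hx6 (sq_nonneg c3)]
  -- squared difference bound
  have hD2 : ‖Complex.exp (-Q L k * (t : ℂ)) - Complex.exp (-Q L k * (τ : ℂ))‖ ^ 2 ≤
      4 * Real.exp (-(2 * c2 * ε * x^2)) *
        ((c2^2 + c3^2)^α * ((1 + x^2)^(3*α) * s^(2*α))) := by
    have hD := diff_bound L k α ε t τ hα0 hα1 hε ht hτ htτ
    rw [← hc2, ← hx, ← hs] at hD
    have hEsq : Real.exp (-(c2 * x^2 * ε)) ^ 2 = Real.exp (-(2 * c2 * ε * x^2)) := by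
      rw [sq, ← Real.exp_add]; congr 1; ring
    calc ‖Complex.exp (-Q L k * (t : ℂ)) - Complex.exp (-Q L k * (τ : ℂ))‖ ^ 2
        ≤ (Real.exp (-(c2 * x^2 * ε)) * (2 * (‖Q L k‖ * s) ^ α)) ^ 2 :=
          pow_le_pow_left₀ (norm_nonneg _) hD 2
      _ = 4 * Real.exp (-(c2 * x^2 * ε)) ^ 2 * ((‖Q L k‖ * s) ^ α) ^ 2 := by ring
      _ = 4 * Real.exp (-(2 * c2 * ε * x^2)) * ((‖Q L k‖ * s) ^ 2) ^ α := by
          rw [hEsq, rpow_two_comm _ (by positivity) α]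
      _ ≤ 4 * Real.exp (-(2 * c2 * ε * x^2)) * (((c2^2 + c3^2) * (1 + x^2)^3 * s^2) ^ α) := by
          apply mul_le_mul_of_nonneg_left _ (by positivity)
          apply Real.rpow_le_rpow (by positivity) _ hα0
          calc (‖Q L k‖ * s) ^ 2 = ‖Q L k‖^2 * s^2 := by ring
            _ ≤ (c2^2 + c3^2) * (1 + x^2)^3 * s^2 :=
                mul_le_mul_of_nonneg_right hQsq (sq_nonneg s)
      _ = 4 * Real.exp (-(2 * c2 * ε * x^2)) *
          ((c2^2 + c3^2)^α * ((1 + x^2)^(3*α) * s^(2*α))) := by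
          rw [Real.mul_rpow (by positivity) (by positivity),
            Real.mul_rpow (by positivity) (by positivity),
            cube_rpow' _ hP0.le, sq_rpow' _ hs0]
          ring
  -- constant bounds
  have hM : (c2^2 + c3^2)^α ≤ Mconst L := by
    rcases le_or_gt (c2^2 + c3^2) 1 with h | h
    · exact le_trans (Real.rpow_le_one (by positivity) h hα0) (le_max_left _ _)
    · calc (c2^2 + c3^2)^α ≤ (c2^2 + c3^2)^(1:ℝ) :=
            Real.rpow_le_rpow_of_exponent_le h.le hα1
        _ = c2^2 + c3^2 := Real.rpow_one _
        _ ≤ Mconst L := by rw [Mconst, ← hc2, ← hc3]; exact le_max_right _ _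
  have hPexp : (1 + x^2)^δ * (1 + x^2)^(3*α) ≤ (1 + x^2)^((N:ℕ):ℝ) := by
    rw [← Real.rpow_add hP0]
    apply Real.rpow_le_rpow_of_exponent_le hP1
    have h1 : δ ≤ (⌈δ⌉₊ : ℝ) := Nat.le_ceil δ
    rw [hN]
    push_cast
    linarith
  have hPN : (1 + x^2)^((N:ℕ):ℝ) * Real.exp (-(2 * c2 * ε * x^2)) ≤ Bconst L δ ε := by
    rw [Real.rpow_natCast]
    rcases eq_or_ne k 0 with hk | hk
    · subst hk
      simp only [hx, Int.cast_zero]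
      norm_num
      exact le_max_left _ _
    · have hx1 : (1:ℝ) ≤ x^2 := by
        have h1 : (1:ℝ) ≤ |x| := by
          rw [hx, ← Int.cast_abs]
          exact_mod_cast Int.one_le_abs hk
        nlinarith [abs_nonneg x, sq_abs x]
      have hcpos : (0:ℝ) < 2 * c2 * ε := by positivity
      have h1 : (1 + x^2)^N ≤ 2^N * (x^2)^N := by
        calc (1 + x^2)^N ≤ (2 * x^2)^N := pow_le_pow_left₀ hP0.le (by linarith) N
          _ = 2^N * (x^2)^N := mul_pow _ _ _
      have h2 : (x^2)^N * Real.exp (-(2 * c2 * ε * x^2)) ≤ (N:ℝ)^N / (2 * c2 * ε)^N := by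
        rw [le_div_iff₀ (by positivity)]
        have h3 := pow_mul_exp_neg_le N hNne (2 * c2 * ε * x^2) (by positivity)
        calc (x^2)^N * Real.exp (-(2 * c2 * ε * x^2)) * (2 * c2 * ε)^N
            = (2 * c2 * ε * x^2)^N * Real.exp (-(2 * c2 * ε * x^2)) := by
              rw [mul_pow]; ring
          _ ≤ (N:ℝ)^N := h3
      calc (1 + x^2)^N * Real.exp (-(2 * c2 * ε * x^2))
          ≤ 2^N * (x^2)^N * Real.exp (-(2 * c2 * ε * x^2)) :=
            mul_le_mul_of_nonneg_right h1 (Real.exp_pos _).le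
        _ = 2^N * ((x^2)^N * Real.exp (-(2 * c2 * ε * x^2))) := by ring
        _ ≤ 2^N * ((N:ℝ)^N / (2 * c2 * ε)^N) := by gcongr
        _ = (2:ℝ)^N * (N:ℝ)^N / (2 * c2 * ε)^N := by ring
        _ ≤ Bconst L δ ε := by
            rw [Bconst, ← hc2, ← hN]
            exact le_max_right _ _
  have hM0 : (0:ℝ) ≤ Mconst L := le_trans zero_le_one (le_max_left _ _)
  have hB0 : (0:ℝ) ≤ Bconst L δ ε := le_trans zero_le_one (le_max_left _ _)
  have hPE : (1 + x^2)^δ * (1 + x^2)^(3*α) * Real.exp (-(2 * c2 * ε * x^2)) ≤ Bconst L δ ε :=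
    (mul_le_mul_of_nonneg_right hPexp (Real.exp_pos _).le).trans hPN
  have hA : (c2^2 + c3^2)^α *
      ((1 + x^2)^δ * (1 + x^2)^(3*α) * Real.exp (-(2 * c2 * ε * x^2))) ≤
      Mconst L * Bconst L δ ε := by
    apply mul_le_mul hM hPE _ hM0
    have e1 : (0:ℝ) ≤ (1 + x^2)^δ := Real.rpow_nonneg hP0.le _
    have e2 : (0:ℝ) ≤ (1 + x^2)^(3*α) := Real.rpow_nonneg hP0.le _
    have e3 : (0:ℝ) ≤ Real.exp (-(2 * c2 * ε * x^2)) := (Real.exp_pos _).le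
    positivity
  have hs2a : (0:ℝ) ≤ s^(2*α) := Real.rpow_nonneg hs0 _
  have hAs := mul_le_mul_of_nonneg_right hA hs2a
  calc (1 + x ^ 2) ^ δ *
        ‖Complex.exp (-Q L k * (t : ℂ)) - Complex.exp (-Q L k * (τ : ℂ))‖ ^ 2
      ≤ (1 + x ^ 2) ^ δ * (4 * Real.exp (-(2 * c2 * ε * x^2)) *
          ((c2^2 + c3^2)^α * ((1 + x^2)^(3*α) * s^(2*α)))) := by
        apply mul_le_mul_of_nonneg_left hD2 (Real.rpow_nonneg hP0.le _)
    _ = 4 * ((c2^2 + c3^2)^α *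
          ((1 + x^2)^δ * (1 + x^2)^(3*α) * Real.exp (-(2 * c2 * ε * x^2))) * s^(2*α)) := by
        ring
    _ ≤ 4 * (Mconst L * Bconst L δ ε * s^(2*α)) := by linarith
    _ = (4 * Mconst L * Bconst L δ ε) * s^(2*α) := by ring

/-- Hölder continuity estimate for the viscous–dispersive semigroup:
`‖V(t)φ − V(τ)φ‖_{r+δ} ≤ K |t−τ|^α ‖φ‖_r` for `t, τ ≥ ε > 0` and any `α ∈ [0,1]`. -/
theorem semigroup_holder_continuity (L : ℝ) (hL : 0 < L) (δ α ε : ℝ)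
    (hδ : 0 ≤ δ) (hα : α ∈ Set.Icc (0 : ℝ) 1) (hε : 0 < ε) :
    ∃ K > (0 : ℝ), ∀ r t τ : ℝ, ε ≤ t → ε ≤ τ → ∀ a : ℤ → ℂ,
      Summable (fun k : ℤ => (1 + |(k : ℝ)| ^ 2) ^ r * ‖a k‖ ^ 2) →
      ∑' k : ℤ, (1 + |(k : ℝ)| ^ 2) ^ (r + δ) *
          ‖(Complex.exp (-Q L k * (t : ℂ)) - Complex.exp (-Q L k * (τ : ℂ))) * a k‖ ^ 2 ≤
        K ^ 2 * |t - τ| ^ (2 * α) *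
          ∑' k : ℤ, (1 + |(k : ℝ)| ^ 2) ^ r * ‖a k‖ ^ 2 := by
  obtain ⟨hα0, hα1⟩ := hα
  have hM1 : (1:ℝ) ≤ Mconst L := le_max_left _ _
  have hB1 : (1:ℝ) ≤ Bconst L δ ε := le_max_left _ _
  set C : ℝ := 4 * Mconst L * Bconst L δ ε with hC
  have hCpos : 0 < C := by rw [hC]; nlinarith
  refine ⟨Real.sqrt C, Real.sqrt_pos.mpr hCpos, ?_⟩
  intro r t τ ht hτ a ha
  have hK2 : Real.sqrt C ^ 2 = C := Real.sq_sqrt hCpos.le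
  rw [hK2]
  -- symmetric pointwise bound
  have key : ∀ k : ℤ, (1 + (k:ℝ) ^ 2) ^ δ *
      ‖Complex.exp (-Q L k * (t : ℂ)) - Complex.exp (-Q L k * (τ : ℂ))‖ ^ 2 ≤
      C * |t - τ| ^ (2 * α) := by
    intro k
    rcases le_total t τ with h | h
    · rw [abs_sub_comm, abs_of_nonneg (by linarith)]
      exact key_bound L hL δ α ε hδ hα0 hα1 hε k t τ ht hτ h
    · rw [abs_of_nonneg (by linarith), norm_sub_rev]
      exact key_bound L hL δ α ε hδ hα0 hα1 hε k τ t hτ ht h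
  -- termwise bound
  have hle : ∀ k : ℤ, (1 + |(k : ℝ)| ^ 2) ^ (r + δ) *
      ‖(Complex.exp (-Q L k * (t : ℂ)) - Complex.exp (-Q L k * (τ : ℂ))) * a k‖ ^ 2 ≤
      C * |t - τ| ^ (2 * α) * ((1 + |(k : ℝ)| ^ 2) ^ r * ‖a k‖ ^ 2) := by
    intro k
    simp only [sq_abs]
    have hP0 : (0:ℝ) < 1 + (k:ℝ)^2 := by positivity
    rw [norm_mul, mul_pow, Real.rpow_add hP0]
    calc (1 + (k:ℝ)^2) ^ r * (1 + (k:ℝ)^2) ^ δ *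
          (‖Complex.exp (-Q L k * (t : ℂ)) - Complex.exp (-Q L k * (τ : ℂ))‖ ^ 2 * ‖a k‖ ^ 2)
        = (1 + (k:ℝ)^2) ^ r * ‖a k‖ ^ 2 *
          ((1 + (k:ℝ)^2) ^ δ *
            ‖Complex.exp (-Q L k * (t : ℂ)) - Complex.exp (-Q L k * (τ : ℂ))‖ ^ 2) := by ring
      _ ≤ (1 + (k:ℝ)^2) ^ r * ‖a k‖ ^ 2 * (C * |t - τ| ^ (2 * α)) := by
          apply mul_le_mul_of_nonneg_left (key k) (by positivity)
      _ = C * |t - τ| ^ (2 * α) * ((1 + (k:ℝ)^2) ^ r * ‖a k‖ ^ 2) := by ring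
  have hg : Summable (fun k : ℤ => C * |t - τ| ^ (2 * α) *
      ((1 + |(k : ℝ)| ^ 2) ^ r * ‖a k‖ ^ 2)) := ha.mul_left _
  have hf : Summable (fun k : ℤ => (1 + |(k : ℝ)| ^ 2) ^ (r + δ) *
      ‖(Complex.exp (-Q L k * (t : ℂ)) - Complex.exp (-Q L k * (τ : ℂ))) * a k‖ ^ 2) := by
    apply Summable.of_nonneg_of_le (fun k => by positivity) hle hg
  calc ∑' k : ℤ, (1 + |(k : ℝ)| ^ 2) ^ (r + δ) *
        ‖(Complex.exp (-Q L k * (t : ℂ)) - Complex.exp (-Q L k * (τ : ℂ))) * a k‖ ^ 2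
      ≤ ∑' k : ℤ, C * |t - τ| ^ (2 * α) * ((1 + |(k : ℝ)| ^ 2) ^ r * ‖a k‖ ^ 2) :=
        Summable.tsum_le_tsum hle hf hg
    _ = C * |t - τ| ^ (2 * α) * ∑' k : ℤ, (1 + |(k : ℝ)| ^ 2) ^ r * ‖a k‖ ^ 2 :=
        tsum_mul_left
end

section
/- Let s > 1/2. There exists a constant C > 0, depending only on s, with the following property: for all a, b : ℤ → ℂ such that k ↦ (1+|k|²)^s·‖a k‖² and k ↦ (1+|k|²)^s·‖b k‖² are summable over ℤ, the convolution c : ℤ → ℂ, c k := ∑'_{j∈ℤ} a j · b (k−j), is well defined (for each k the series converges absolutely), the function k ↦ (1+|k|²)^s·‖c k‖² is summable, and ∑'_{k∈ℤ} (1+|k|²)^s·‖c k‖² ≤ C² · (∑'_{k∈ℤ} (1+|k|²)^s·‖a k‖²) · (∑'_{k∈ℤ} (1+|k|²)^s·‖b k‖²). (This is the Fourier-coefficient formulation of the fact that the periodic Sobolev space H^s_per is a Banach algebra for s > 1/2.) -/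
open Real

/-- Cauchy–Schwarz for infinite sums of nonnegative reals. -/
private lemma cs_tsum {f g : ℤ → ℝ} (hf0 : ∀ j, 0 ≤ f j) (hg0 : ∀ j, 0 ≤ g j)
    (hf : Summable fun j => f j ^ 2) (hg : Summable fun j => g j ^ 2) :
    Summable (fun j : ℤ => f j * g j) ∧
      (∑' j : ℤ, f j * g j) ^ 2 ≤ (∑' j : ℤ, f j ^ 2) * (∑' j : ℤ, g j ^ 2) := by
  have hfg : Summable fun j : ℤ => f j * g j := by
    refine Summable.of_nonneg_of_le (fun j => mul_nonneg (hf0 j) (hg0 j))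
      (fun j => ?_) ((hf.add hg).mul_left (1 / 2 : ℝ))
    nlinarith [sq_nonneg (f j - g j)]
  refine ⟨hfg, ?_⟩
  have hTf : (0:ℝ) ≤ ∑' j : ℤ, f j ^ 2 := tsum_nonneg fun j => sq_nonneg _
  have hTg : (0:ℝ) ≤ ∑' j : ℤ, g j ^ 2 := tsum_nonneg fun j => sq_nonneg _
  have h1 : ∑' j : ℤ, f j * g j ≤
      Real.sqrt ((∑' j : ℤ, f j ^ 2) * (∑' j : ℤ, g j ^ 2)) := by
    refine Summable.tsum_le_of_sum_le hfg fun u => ?_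
    have h2 : (∑ j ∈ u, f j * g j) ^ 2 ≤ (∑ j ∈ u, f j ^ 2) * ∑ j ∈ u, g j ^ 2 :=
      Finset.sum_mul_sq_le_sq_mul_sq u f g
    have h3 : (∑ j ∈ u, f j ^ 2) * ∑ j ∈ u, g j ^ 2 ≤
        (∑' j : ℤ, f j ^ 2) * (∑' j : ℤ, g j ^ 2) :=
      mul_le_mul (Summable.sum_le_tsum u (fun j _ => sq_nonneg _) hf)
        (Summable.sum_le_tsum u (fun j _ => sq_nonneg _) hg)
        (Finset.sum_nonneg fun j _ => sq_nonneg _) hTf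
    have h4 : (0:ℝ) ≤ ∑ j ∈ u, f j * g j :=
      Finset.sum_nonneg fun j _ => mul_nonneg (hf0 j) (hg0 j)
    rw [show ∑ j ∈ u, f j * g j = Real.sqrt ((∑ j ∈ u, f j * g j) ^ 2) by
      rw [Real.sqrt_sq h4]]
    exact Real.sqrt_le_sqrt (le_trans h2 h3)
  calc (∑' j : ℤ, f j * g j) ^ 2
      ≤ Real.sqrt ((∑' j : ℤ, f j ^ 2) * (∑' j : ℤ, g j ^ 2)) ^ 2 :=
        pow_le_pow_left₀ (tsum_nonneg fun j => mul_nonneg (hf0 j) (hg0 j)) h1 2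
    _ = (∑' j : ℤ, f j ^ 2) * (∑' j : ℤ, g j ^ 2) :=
        Real.sq_sqrt (mul_nonneg hTf hTg)

/-- Banach algebra property of `H^s_per` for `s > 1/2`, in Fourier-coefficient form:
the convolution of two `H^s`-summable coefficient sequences is well defined,
`H^s`-summable, and its `H^s`-type norm is controlled by the product of the norms. -/
theorem Hs_banach_algebra_convolution (s : ℝ) (hs : 1 / 2 < s) :
    ∃ C > (0 : ℝ), ∀ a b : ℤ → ℂ,
      Summable (fun k : ℤ => (1 + |(k : ℝ)| ^ 2) ^ s * ‖a k‖ ^ 2) →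
      Summable (fun k : ℤ => (1 + |(k : ℝ)| ^ 2) ^ s * ‖b k‖ ^ 2) →
      (∀ k : ℤ, Summable fun j : ℤ => ‖a j * b (k - j)‖) ∧
      Summable (fun k : ℤ =>
        (1 + |(k : ℝ)| ^ 2) ^ s * ‖∑' j : ℤ, a j * b (k - j)‖ ^ 2) ∧
      ∑' k : ℤ, (1 + |(k : ℝ)| ^ 2) ^ s * ‖∑' j : ℤ, a j * b (k - j)‖ ^ 2 ≤
        C ^ 2 * (∑' k : ℤ, (1 + |(k : ℝ)| ^ 2) ^ s * ‖a k‖ ^ 2) *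
          (∑' k : ℤ, (1 + |(k : ℝ)| ^ 2) ^ s * ‖b k‖ ^ 2) := by
  have hs0 : (0:ℝ) < s := lt_trans (by norm_num) hs
  set w : ℤ → ℝ := fun k => (1 + |(k : ℝ)| ^ 2) ^ s with hwdef
  have hbase : ∀ k : ℤ, (1:ℝ) ≤ 1 + |(k : ℝ)| ^ 2 := fun k => by nlinarith [sq_nonneg |(k:ℝ)|]
  have hw1 : ∀ k, (1:ℝ) ≤ w k := fun k => Real.one_le_rpow (hbase k) hs0.le
  have hwpos : ∀ k, (0:ℝ) < w k := fun k => lt_of_lt_of_le one_pos (hw1 k)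
  -- summability of the inverse weights
  have hWsum : Summable fun j : ℤ => (w j)⁻¹ := by
    have h2s : (1:ℝ) < 2 * s := by linarith
    have h1 : Summable fun j : ℤ => |(j : ℝ)| ^ (-(2 * s)) :=
      Real.summable_abs_int_rpow h2s
    have h2 : Summable fun j : ℤ => (if j = 0 then (1:ℝ) else 0) := by
      apply summable_of_ne_finset_zero (s := {(0:ℤ)})
      intro j hj
      simp only [Finset.mem_singleton] at hj
      simp [hj]
    refine Summable.of_nonneg_of_le (fun j => by positivity) (fun j => ?_) (h1.add h2)
    rcases eq_or_ne j 0 with rfl | hj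
    · have hz : |((0:ℤ) : ℝ)| ^ (-(2 * s)) = 0 := by
        rw [Int.cast_zero, abs_zero]
        exact Real.zero_rpow (neg_ne_zero.mpr (by linarith : (2:ℝ) * s ≠ 0))
      have hw0 : w (0:ℤ) = 1 := by simp [hwdef]
      rw [hw0, hz]
      norm_num
    · have hj1 : (1:ℝ) ≤ |(j : ℝ)| := by
        rw [← Int.cast_abs]
        exact_mod_cast Int.one_le_abs hj
      have hle : |(j : ℝ)| ^ (2 * s) ≤ w j := by
        have heq : |(j : ℝ)| ^ (2 * s) = (|(j : ℝ)| ^ 2) ^ s := by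
          rw [← Real.rpow_natCast |(j : ℝ)| 2, ← Real.rpow_mul (abs_nonneg _)]
          norm_num
        rw [heq]
        exact Real.rpow_le_rpow (by positivity) (by linarith [sq_nonneg |(j:ℝ)|]) hs0.le
      have hpos : (0:ℝ) < |(j : ℝ)| ^ (2 * s) :=
        Real.rpow_pos_of_pos (lt_of_lt_of_le one_pos hj1) _
      calc (w j)⁻¹ ≤ (|(j : ℝ)| ^ (2 * s))⁻¹ := inv_anti₀ hpos hle
        _ = |(j : ℝ)| ^ (-(2 * s)) := (Real.rpow_neg (abs_nonneg _) _).symm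
        _ ≤ |(j : ℝ)| ^ (-(2 * s)) + (if j = 0 then (1:ℝ) else 0) := by simp [hj]
  set S0 : ℝ := ∑' j : ℤ, (w j)⁻¹ with hSdef
  have hSpos : 0 < S0 := Summable.tsum_pos hWsum (fun j => (inv_pos.mpr (hwpos j)).le) 0
    (inv_pos.mpr (hwpos 0))
  set K : ℝ := 2 * (4:ℝ) ^ s * S0 with hKdef
  have h4s : (0:ℝ) < (4:ℝ) ^ s := Real.rpow_pos_of_pos (by norm_num) s
  have hKpos : 0 < K := by positivity
  -- the key weight inequality
  have hW2 : ∀ k j : ℤ, w k ≤ (4:ℝ) ^ s * (w j + w (k - j)) := by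
    intro k j
    have hcast : ((k : ℝ)) = (j : ℝ) + ((k - j : ℤ) : ℝ) := by push_cast; ring
    have habs : |(k:ℝ)| ≤ |(j:ℝ)| + |((k - j : ℤ) : ℝ)| := by
      rw [hcast]; exact abs_add_le _ _
    have hsq : |(k:ℝ)| ^ 2 ≤ 2 * |(j:ℝ)| ^ 2 + 2 * |((k - j : ℤ) : ℝ)| ^ 2 := by
      nlinarith [abs_nonneg ((k:ℝ)), abs_nonneg ((j:ℝ)), abs_nonneg (((k - j : ℤ) : ℝ)),
        sq_nonneg (|(j:ℝ)| - |((k - j : ℤ) : ℝ)|)]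
    rcases le_total (1 + |(j:ℝ)| ^ 2) (1 + |((k - j : ℤ) : ℝ)| ^ 2) with h | h
    · have h1 : (1 + |(k:ℝ)| ^ 2) ≤ 4 * (1 + |((k - j : ℤ) : ℝ)| ^ 2) := by nlinarith
      have h2 : w k ≤ (4 * (1 + |((k - j : ℤ) : ℝ)| ^ 2)) ^ s :=
        Real.rpow_le_rpow (by positivity) h1 hs0.le
      have h3 : (4 * (1 + |((k - j : ℤ) : ℝ)| ^ 2)) ^ s = (4:ℝ) ^ s * w (k - j) :=
        Real.mul_rpow (by norm_num) (by positivity)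
      nlinarith [(hwpos j).le, h3 ▸ h2]
    · have h1 : (1 + |(k:ℝ)| ^ 2) ≤ 4 * (1 + |(j:ℝ)| ^ 2) := by nlinarith
      have h2 : w k ≤ (4 * (1 + |(j:ℝ)| ^ 2)) ^ s :=
        Real.rpow_le_rpow (by positivity) h1 hs0.le
      have h3 : (4 * (1 + |(j:ℝ)| ^ 2)) ^ s = (4:ℝ) ^ s * w j :=
        Real.mul_rpow (by norm_num) (by positivity)
      nlinarith [(hwpos (k - j)).le, h3 ▸ h2]
  refine ⟨Real.sqrt K, Real.sqrt_pos.2 hKpos, ?_⟩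
  intro a b ha hb
  have hC2 : Real.sqrt K ^ 2 = K := Real.sq_sqrt hKpos.le
  set A : ℤ → ℝ := fun j => w j * ‖a j‖ ^ 2 with hAdef
  set B : ℤ → ℝ := fun j => w j * ‖b j‖ ^ 2 with hBdef
  have hA0 : ∀ j, 0 ≤ A j := fun j => mul_nonneg (hwpos j).le (sq_nonneg _)
  have hB0 : ∀ j, 0 ≤ B j := fun j => mul_nonneg (hwpos j).le (sq_nonneg _)
  have hA : Summable A := ha
  have hB : Summable B := hb
  -- summability of the two-dimensional family
  have hFprod : Summable (fun p : ℤ × ℤ => A p.1 * B p.2) :=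
    hA.mul_of_nonneg hB hA0 hB0
  let e : ℤ × ℤ ≃ ℤ × ℤ :=
    ⟨fun q => (q.2, q.1 - q.2), fun p => (p.1 + p.2, p.1),
      fun q => by simp, fun p => by simp⟩
  have hF : Summable (fun p : ℤ × ℤ => A p.2 * B (p.1 - p.2)) := by
    have := (Equiv.summable_iff e (f := fun p : ℤ × ℤ => A p.1 * B p.2)).2 hFprod
    exact this.congr fun q => rfl
  -- the fiberwise sums
  set G : ℤ → ℝ := fun k => ∑' j : ℤ, A j * B (k - j) with hGdef
  have hGfib : ∀ k, Summable fun j : ℤ => A j * B (k - j) := fun k => hF.prod_factor k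
  have hGhas : HasSum G (∑' p : ℤ × ℤ, A p.2 * B (p.1 - p.2)) :=
    HasSum.prod_fiberwise hF.hasSum fun k => (hGfib k).hasSum
  have hG : Summable G := hGhas.summable
  have hG0 : ∀ k, 0 ≤ G k := fun k =>
    tsum_nonneg fun j => mul_nonneg (hA0 j) (hB0 _)
  have hGsum : ∑' k : ℤ, G k = (∑' j : ℤ, A j) * (∑' j : ℤ, B j) := by
    have h1 : ∑' p : ℤ × ℤ, A p.2 * B (p.1 - p.2) = ∑' p : ℤ × ℤ, A p.1 * B p.2 := by
      rw [← Equiv.tsum_eq e (fun p : ℤ × ℤ => A p.1 * B p.2)]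
      exact tsum_congr fun q => rfl
    have h2 : ((∑' j : ℤ, A j) * ∑' j : ℤ, B j) = ∑' p : ℤ × ℤ, A p.1 * B p.2 :=
      tsum_mul_tsum_of_summable_norm
        (by simpa [Real.norm_eq_abs, abs_of_nonneg (hA0 _)] using hA)
        (by simpa [Real.norm_eq_abs, abs_of_nonneg (hB0 _)] using hB)
    rw [hGhas.tsum_eq, h1, ← h2]
  -- pointwise Cauchy–Schwarz with weights
  have hkey : ∀ k : ℤ, (Summable fun j : ℤ => ‖a j‖ * ‖b (k - j)‖) ∧
      w k * (∑' j : ℤ, ‖a j‖ * ‖b (k - j)‖) ^ 2 ≤ K * G k := by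
    intro k
    set u : ℤ → ℝ := fun j => w k * ((w j)⁻¹ * (w (k - j))⁻¹) with hudef
    set v : ℤ → ℝ := fun j => (w k)⁻¹ * (A j * B (k - j)) with hvdef
    have hu0 : ∀ j, 0 ≤ u j := fun j => by positivity
    have hv0 : ∀ j, 0 ≤ v j := fun j =>
      mul_nonneg (inv_pos.mpr (hwpos k)).le (mul_nonneg (hA0 j) (hB0 _))
    have hWshift : Summable fun j : ℤ => (w (k - j))⁻¹ := by
      have := (Equiv.subLeft k).summable_iff (f := fun j : ℤ => (w j)⁻¹)
      exact (this.2 hWsum).congr fun j => by simp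
    have huB : ∀ j, u j ≤ (4:ℝ) ^ s * ((w j)⁻¹ + (w (k - j))⁻¹) := by
      intro j
      have h1 := hW2 k j
      have h2 : (0:ℝ) ≤ (w j)⁻¹ * (w (k - j))⁻¹ := by positivity
      have h3 : (w j + w (k - j)) * ((w j)⁻¹ * (w (k - j))⁻¹)
          = (w (k - j))⁻¹ + (w j)⁻¹ := by
        have hj' := (hwpos j).ne'
        have hkj' := (hwpos (k - j)).ne'
        rw [add_mul]
        congr 1
        · rw [← mul_assoc, mul_inv_cancel₀ hj', one_mul]
        · rw [mul_comm ((w j)⁻¹), ← mul_assoc, mul_inv_cancel₀ hkj', one_mul]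
      calc u j ≤ ((4:ℝ) ^ s * (w j + w (k - j))) * ((w j)⁻¹ * (w (k - j))⁻¹) :=
            mul_le_mul_of_nonneg_right h1 h2
        _ = (4:ℝ) ^ s * ((w j)⁻¹ + (w (k - j))⁻¹) := by rw [mul_assoc, h3]; ring
    have hu : Summable u :=
      Summable.of_nonneg_of_le hu0 huB (((hWsum.add hWshift)).mul_left ((4:ℝ) ^ s))
    have hUle : ∑' j : ℤ, u j ≤ K := by
      have h1 : ∑' j : ℤ, u j ≤
          ∑' j : ℤ, (4:ℝ) ^ s * ((w j)⁻¹ + (w (k - j))⁻¹) :=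
        Summable.tsum_le_tsum huB hu (((hWsum.add hWshift)).mul_left ((4:ℝ) ^ s))
      have h2 : ∑' j : ℤ, (w (k - j))⁻¹ = S0 := by
        rw [hSdef, ← Equiv.tsum_eq (Equiv.subLeft k) (fun j : ℤ => (w j)⁻¹)]
        exact tsum_congr fun j => by simp
      have h3 : ∑' j : ℤ, (4:ℝ) ^ s * ((w j)⁻¹ + (w (k - j))⁻¹) = K := by
        rw [tsum_mul_left, Summable.tsum_add hWsum hWshift, h2, ← hSdef, hKdef]; ring
      linarith [h3 ▸ h1]
    have hv : Summable v := (hGfib k).mul_left _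
    have hVsum : ∑' j : ℤ, v j = (w k)⁻¹ * G k := by
      rw [hvdef, tsum_mul_left, hGdef]
    -- apply Cauchy–Schwarz to sqrt u, sqrt v
    set p : ℤ → ℝ := fun j => Real.sqrt (u j) with hpdef
    set q : ℤ → ℝ := fun j => Real.sqrt (v j) with hqdef
    have hp2 : ∀ j, p j ^ 2 = u j := fun j => Real.sq_sqrt (hu0 j)
    have hq2 : ∀ j, q j ^ 2 = v j := fun j => Real.sq_sqrt (hv0 j)
    have hpq : ∀ j, p j * q j = ‖a j‖ * ‖b (k - j)‖ := by
      intro j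
      rw [hpdef, hqdef]
      rw [← Real.sqrt_mul (hu0 j)]
      have huv : u j * v j = (‖a j‖ * ‖b (k - j)‖) ^ 2 := by
        have hwk := (hwpos k).ne'
        have hwj := (hwpos j).ne'
        have hwkj := (hwpos (k - j)).ne'
        rw [hudef, hvdef, hAdef, hBdef]
        field_simp
      rw [huv, Real.sqrt_sq (by positivity)]
    obtain ⟨hpqsum, hcs⟩ := cs_tsum (f := p) (g := q)
      (fun j => Real.sqrt_nonneg _) (fun j => Real.sqrt_nonneg _)
      ((hu.congr fun j => (hp2 j).symm)) ((hv.congr fun j => (hq2 j).symm))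
    have hsum1 : Summable fun j : ℤ => ‖a j‖ * ‖b (k - j)‖ :=
      hpqsum.congr hpq
    refine ⟨hsum1, ?_⟩
    have ht1 : ∑' j : ℤ, p j * q j = ∑' j : ℤ, ‖a j‖ * ‖b (k - j)‖ :=
      tsum_congr hpq
    have ht2 : ∑' j : ℤ, p j ^ 2 = ∑' j : ℤ, u j := tsum_congr hp2
    have ht3 : ∑' j : ℤ, q j ^ 2 = ∑' j : ℤ, v j := tsum_congr hq2
    rw [ht1, ht2, ht3, hVsum] at hcs
    have hV0 : (0:ℝ) ≤ (w k)⁻¹ * G k := mul_nonneg (inv_pos.mpr (hwpos k)).le (hG0 k)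
    have hchain : (∑' j : ℤ, ‖a j‖ * ‖b (k - j)‖) ^ 2 ≤ K * ((w k)⁻¹ * G k) :=
      le_trans hcs (mul_le_mul_of_nonneg_right hUle hV0)
    have := mul_le_mul_of_nonneg_left hchain (hwpos k).le
    calc w k * (∑' j : ℤ, ‖a j‖ * ‖b (k - j)‖) ^ 2
        ≤ w k * (K * ((w k)⁻¹ * G k)) := this
      _ = K * G k := by
        field_simp
        exact mul_div_cancel_left₀ _ (hwpos k).ne'
  -- conclude
  have hnormmul : ∀ k j : ℤ, ‖a j * b (k - j)‖ = ‖a j‖ * ‖b (k - j)‖ := fun k j => norm_mul _ _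
  have part1 : ∀ k : ℤ, Summable fun j : ℤ => ‖a j * b (k - j)‖ := fun k =>
    ((hkey k).1).congr fun j => (hnormmul k j).symm
  have hbound : ∀ k : ℤ, w k * ‖∑' j : ℤ, a j * b (k - j)‖ ^ 2 ≤ K * G k := by
    intro k
    have h1 : ‖∑' j : ℤ, a j * b (k - j)‖ ≤ ∑' j : ℤ, ‖a j * b (k - j)‖ :=
      norm_tsum_le_tsum_norm (part1 k)
    have h2 : ∑' j : ℤ, ‖a j * b (k - j)‖ = ∑' j : ℤ, ‖a j‖ * ‖b (k - j)‖ :=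
      tsum_congr fun j => hnormmul k j
    have h3 : ‖∑' j : ℤ, a j * b (k - j)‖ ^ 2 ≤ (∑' j : ℤ, ‖a j‖ * ‖b (k - j)‖) ^ 2 :=
      pow_le_pow_left₀ (norm_nonneg _) (h2 ▸ h1) 2
    calc w k * ‖∑' j : ℤ, a j * b (k - j)‖ ^ 2
        ≤ w k * (∑' j : ℤ, ‖a j‖ * ‖b (k - j)‖) ^ 2 :=
          mul_le_mul_of_nonneg_left h3 (hwpos k).le
      _ ≤ K * G k := (hkey k).2
  have part2 : Summable (fun k : ℤ => w k * ‖∑' j : ℤ, a j * b (k - j)‖ ^ 2) :=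
    Summable.of_nonneg_of_le (fun k => mul_nonneg (hwpos k).le (sq_nonneg _)) hbound
      (hG.mul_left K)
  refine ⟨part1, part2, ?_⟩
  have h1 : ∑' k : ℤ, w k * ‖∑' j : ℤ, a j * b (k - j)‖ ^ 2 ≤ ∑' k : ℤ, K * G k :=
    Summable.tsum_le_tsum hbound part2 (hG.mul_left K)
  have h2 : ∑' k : ℤ, K * G k = K * ((∑' j : ℤ, A j) * (∑' j : ℤ, B j)) := by
    rw [tsum_mul_left, hGsum]
  rw [hC2]
  calc ∑' k : ℤ, w k * ‖∑' j : ℤ, a j * b (k - j)‖ ^ 2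
      ≤ K * ((∑' j : ℤ, A j) * (∑' j : ℤ, B j)) := h2 ▸ h1
    _ = K * (∑' j : ℤ, A j) * (∑' j : ℤ, B j) := by ring
end

section
/- Let L > 0, let u : ℝ → ℂ be three times continuously differentiable and L-periodic, let a₁ : ℝ → ℝ be continuously differentiable and L-periodic, let a₀ : ℝ → ℝ be continuous and L-periodic, and set C₀ := sup_{x ∈ [0,L]} |a₀(x) − a₁′(x)/2|. Let λ ∈ ℂ with Re λ > C₀ and define h : ℝ → ℂ by h(x) := λ·u(x) + u‴(x) − u″(x) − a₁(x)·u′(x) − a₀(x)·u(x). Then (Re λ − C₀) · (∫₀^L ‖u(x)‖² dx)^{1/2} ≤ (∫₀^L ‖h(x)‖² dx)^{1/2}. (This is the resolvent estimate ‖(λ − 𝓛)^{-1}‖ ≤ 1/(Re λ − C₀) for the linearized operator 𝓛 u = −u‴ + u″ + a₁ u′ + a₀ u on L²_per([0,L]), showing that 𝓛 generates a quasicontractive semigroup.) -/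
open MeasureTheory Complex intervalIntegral

lemma interval_cauchy_schwarz (a b : ℝ) (hab : a ≤ b) (f g : ℝ → ℝ)
    (hf : Continuous f) (hg : Continuous g) :
    ∫ x in a..b, f x * g x ≤
      Real.sqrt (∫ x in a..b, f x ^ 2) * Real.sqrt (∫ x in a..b, g x ^ 2) := by
  set A := ∫ x in a..b, f x ^ 2 with hA
  set B := ∫ x in a..b, g x ^ 2 with hB
  set C := ∫ x in a..b, f x * g x with hC
  have hif2 : IntervalIntegrable (fun x => f x ^ 2) MeasureTheory.volume a b :=
    (hf.pow 2).intervalIntegrable a b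
  have hig2 : IntervalIntegrable (fun x => g x ^ 2) MeasureTheory.volume a b :=
    (hg.pow 2).intervalIntegrable a b
  have hifg : IntervalIntegrable (fun x => f x * g x) MeasureTheory.volume a b :=
    (hf.mul hg).intervalIntegrable a b
  have hA0 : 0 ≤ A := intervalIntegral.integral_nonneg hab (fun x _ => sq_nonneg _)
  have hB0 : 0 ≤ B := intervalIntegral.integral_nonneg hab (fun x _ => sq_nonneg _)
  have key : ∀ t : ℝ, 0 ≤ A - 2 * t * C + t ^ 2 * B := by
    intro t
    have h0 : 0 ≤ ∫ x in a..b, (f x - t * g x) ^ 2 :=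
      intervalIntegral.integral_nonneg hab (fun x _ => sq_nonneg _)
    have hexp : (∫ x in a..b, (f x - t * g x) ^ 2)
        = A - 2 * t * C + t ^ 2 * B := by
      have : ∀ x, (f x - t * g x) ^ 2
          = f x ^ 2 - (2 * t) * (f x * g x) + t ^ 2 * g x ^ 2 := by
        intro x; ring
      rw [intervalIntegral.integral_congr (fun x _ => this x)]
      rw [intervalIntegral.integral_add ((hif2.sub (hifg.const_mul _)))
        (hig2.const_mul _), intervalIntegral.integral_sub hif2 (hifg.const_mul _),
        intervalIntegral.integral_const_mul, intervalIntegral.integral_const_mul]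
    linarith [hexp ▸ h0]
  have hsA : Real.sqrt A ^ 2 = A := Real.sq_sqrt hA0
  have hsB : Real.sqrt B ^ 2 = B := Real.sq_sqrt hB0
  rcases eq_or_lt_of_le hB0 with hB' | hB'
  · by_contra hlt
    push_neg at hlt
    have hC0 : 0 < C := lt_of_le_of_lt (mul_nonneg (Real.sqrt_nonneg _) (Real.sqrt_nonneg _)) hlt
    have hk := key ((A + 1) / (2 * C))
    rw [← hB'] at hk
    have he : 2 * ((A + 1) / (2 * C)) * C = A + 1 := by
      field_simp
    rw [he] at hk
    linarith
  · have hk := key (C / B)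
    have hBne : B ≠ 0 := ne_of_gt hB'
    have he : A - 2 * (C / B) * C + (C / B) ^ 2 * B = A - C ^ 2 / B := by
      field_simp; ring
    rw [he] at hk
    have hCsq : C ^ 2 ≤ A * B := by
      have := (div_le_iff₀ hB').mp (by linarith : C ^ 2 / B ≤ A)
      linarith [this]
    have hCsq' : C ^ 2 ≤ (Real.sqrt A * Real.sqrt B) ^ 2 := by
      rw [mul_pow, hsA, hsB]; exact hCsq
    nlinarith [mul_nonneg (Real.sqrt_nonneg A) (Real.sqrt_nonneg B)]


/-- Resolvent estimate for the linearized KdV–Burgers operator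
`𝓛u = −u‴ + u″ + a₁·u′ + a₀·u` on `L²_per([0,L])`: if `Re λ > C₀` with
`C₀ = sup_{[0,L]} |a₀ − a₁′/2|` and `h = (λ − 𝓛)u`, then
`(Re λ − C₀)·‖u‖_{L²(0,L)} ≤ ‖h‖_{L²(0,L)}`. -/
theorem linearized_operator_resolvent_estimate (L : ℝ) (hL : 0 < L)
    (u : ℝ → ℂ) (hu : ContDiff ℝ 3 u) (huL : ∀ x, u (x + L) = u x)
    (a₁ : ℝ → ℝ) (ha₁ : ContDiff ℝ 1 a₁) (ha₁L : ∀ x, a₁ (x + L) = a₁ x)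
    (a₀ : ℝ → ℝ) (ha₀ : Continuous a₀) (ha₀L : ∀ x, a₀ (x + L) = a₀ x)
    (C₀ : ℝ) (hC₀ : C₀ = sSup ((fun x => |a₀ x - deriv a₁ x / 2|) '' Set.Icc 0 L))
    (lam : ℂ) (hlam : C₀ < lam.re)
    (h : ℝ → ℂ)
    (hh : ∀ x, h x = lam * u x + iteratedDeriv 3 u x - iteratedDeriv 2 u x -
        (a₁ x : ℂ) * deriv u x - (a₀ x : ℂ) * u x) :
    (lam.re - C₀) * Real.sqrt (∫ x in (0:ℝ)..L, ‖u x‖ ^ 2) ≤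
      Real.sqrt (∫ x in (0:ℝ)..L, ‖h x‖ ^ 2) := by
  set u1 := deriv u with hu1def
  set u2 := deriv u1 with hu2def
  set u3 := deriv u2 with hu3def
  -- smoothness chain
  have hu' : ContDiff ℝ (2 + 1 : ℕ) u := by exact_mod_cast hu
  have hdu : Differentiable ℝ u := hu.differentiable (by norm_num)
  have hu1c : ContDiff ℝ 2 u1 := by
    exact_mod_cast (contDiff_succ_iff_deriv.mp hu').2.2
  have hu1c' : ContDiff ℝ (1 + 1 : ℕ) u1 := by exact_mod_cast hu1c
  have hdu1 : Differentiable ℝ u1 := hu1c.differentiable (by norm_num)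
  have hu2c : ContDiff ℝ 1 u2 := by
    exact_mod_cast (contDiff_succ_iff_deriv.mp hu1c').2.2
  have hdu2 : Differentiable ℝ u2 := hu2c.differentiable (by norm_num)
  have cu : Continuous u := hu.continuous
  have cu1 : Continuous u1 := hu1c.continuous
  have cu2 : Continuous u2 := hu2c.continuous
  have cu3 : Continuous u3 := hu2c.continuous_deriv le_rfl
  have hda1 : Differentiable ℝ a₁ := ha₁.differentiable (by norm_num)
  have ca1 : Continuous a₁ := ha₁.continuous
  have ca1' : Continuous (deriv a₁) := ha₁.continuous_deriv le_rfl
  -- derivative facts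
  have Hu : ∀ x, HasDerivAt u (u1 x) x := fun x => (hdu x).hasDerivAt
  have Hu1 : ∀ x, HasDerivAt u1 (u2 x) x := fun x => (hdu1 x).hasDerivAt
  have Hu2 : ∀ x, HasDerivAt u2 (u3 x) x := fun x => (hdu2 x).hasDerivAt
  have Ha1 : ∀ x, HasDerivAt a₁ (deriv a₁ x) x := fun x => (hda1 x).hasDerivAt
  -- iterated derivs
  have hit2 : iteratedDeriv 2 u = u2 := by
    simp [iteratedDeriv_succ, iteratedDeriv_one, hu2def, hu1def]
  have hit3 : iteratedDeriv 3 u = u3 := by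
    simp [iteratedDeriv_succ, iteratedDeriv_one, hu3def, hu2def, hu1def]
  -- periodicity of derivatives
  have hperiod : ∀ (f : ℝ → ℂ), (∀ x, f (x + L) = f x) → ∀ x, deriv f (x + L) = deriv f x := by
    intro f hf x
    have hfl : (fun y => f (y + L)) = f := funext hf
    conv_rhs => rw [← hfl]
    rw [deriv_comp_add_const]
  have hu1L : ∀ x, u1 (x + L) = u1 x := hperiod u huL
  have hu2L : ∀ x, u2 (x + L) = u2 x := hperiod u1 hu1L
  have ha1L' : ∀ x, deriv a₁ (x + L) = deriv a₁ x := by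
    intro x
    have hfl : (fun y => a₁ (y + L)) = a₁ := funext ha₁L
    conv_rhs => rw [← hfl]
    rw [deriv_comp_add_const]
  -- conj derivatives
  have Hcu : ∀ x, HasDerivAt (fun y => (starRingEnd ℂ) (u y)) ((starRingEnd ℂ) (u1 x)) x :=
    fun x => (Hu x).star
  have Hcu1 : ∀ x, HasDerivAt (fun y => (starRingEnd ℂ) (u1 y)) ((starRingEnd ℂ) (u2 x)) x :=
    fun x => (Hu1 x).star
  -- the boundary function and its derivative
  set cF : ℝ → ℂ := fun x => u2 x * (starRingEnd ℂ) (u x)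
      - u1 x * (starRingEnd ℂ) (u1 x) / 2
      - u1 x * (starRingEnd ℂ) (u x)
      - (a₁ x : ℂ) * (u x * (starRingEnd ℂ) (u x)) / 2 with hcF
  set cG : ℝ → ℂ := fun x =>
      (u3 x * (starRingEnd ℂ) (u x) + u2 x * (starRingEnd ℂ) (u1 x))
      - (u2 x * (starRingEnd ℂ) (u1 x) + u1 x * (starRingEnd ℂ) (u2 x)) / 2
      - (u2 x * (starRingEnd ℂ) (u x) + u1 x * (starRingEnd ℂ) (u1 x))
      - (((deriv a₁ x : ℝ) : ℂ) * (u x * (starRingEnd ℂ) (u x))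
          + (a₁ x : ℂ) * (u1 x * (starRingEnd ℂ) (u x) + u x * (starRingEnd ℂ) (u1 x))) / 2
      with hcG
  have HcF : ∀ x, HasDerivAt cF (cG x) x := fun x =>
    ((((Hu2 x).mul (Hcu x)).sub (((Hu1 x).mul (Hcu1 x)).div_const 2)).sub
      ((Hu1 x).mul (Hcu x))).sub
      ((((Ha1 x).ofReal_comp).mul ((Hu x).mul (Hcu x))).div_const 2)
  have HF : ∀ x, HasDerivAt (fun x => (cF x).re) ((cG x).re) x := fun x =>
    (Complex.reCLM.hasFDerivAt.comp_hasDerivAt x (HcF x))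
  have ccu : Continuous (fun x => (starRingEnd ℂ) (u x)) := continuous_star.comp cu
  have ccu1 : Continuous (fun x => (starRingEnd ℂ) (u1 x)) := continuous_star.comp cu1
  have ccu2 : Continuous (fun x => (starRingEnd ℂ) (u2 x)) := continuous_star.comp cu2
  have ccG : Continuous cG := by
    rw [hcG]
    exact ((((cu3.mul ccu).add (cu2.mul ccu1)).sub
      (((cu2.mul ccu1).add (cu1.mul ccu2)).div_const 2)).sub
      ((cu2.mul ccu).add (cu1.mul ccu1))).sub
      ((((Complex.continuous_ofReal.comp ca1').mul (cu.mul ccu)).add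
        ((Complex.continuous_ofReal.comp ca1).mul ((cu1.mul ccu).add (cu.mul ccu1)))).div_const 2)
  have cF_per : cF L = cF 0 := by
    rw [show (L : ℝ) = 0 + L from (zero_add L).symm]
    simp only [hcF, huL, hu1L, hu2L, ha₁L]
  -- boundary term vanishes
  have hbdry : (∫ x in (0:ℝ)..L, (cG x).re) = 0 := by
    rw [intervalIntegral.integral_eq_sub_of_hasDerivAt (fun x _ => HF x)
      ((Complex.continuous_re.comp ccG).intervalIntegrable 0 L)]
    rw [cF_per]
    ring
  -- squared norm in coordinates
  have hnsq : ∀ z : ℂ, ‖z‖ ^ 2 = z.re ^ 2 + z.im ^ 2 := by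
    intro z
    rw [Complex.sq_norm, Complex.normSq_apply]
    ring
  -- pointwise energy identity
  have hpoint : ∀ x, (h x * (starRingEnd ℂ) (u x)).re
      = (cG x).re + lam.re * ‖u x‖ ^ 2 + ‖u1 x‖ ^ 2
        + (deriv a₁ x / 2 - a₀ x) * ‖u x‖ ^ 2 := by
    intro x
    rw [hh x, hit3, hit2, hcG, hnsq, hnsq]
    simp only [Complex.mul_re, Complex.mul_im, Complex.add_re, Complex.add_im,
      Complex.sub_re, Complex.sub_im, Complex.conj_re, Complex.conj_im,
      Complex.ofReal_re, Complex.ofReal_im, Complex.div_ofNat_re, Complex.div_ofNat_im]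
    ring
  -- continuity of h
  have ch : Continuous h := by
    rw [funext hh, hit3, hit2]
    exact ((((continuous_const.mul cu).add cu3).sub cu2).sub
      ((Complex.continuous_ofReal.comp ca1).mul cu1)).sub
      ((Complex.continuous_ofReal.comp ha₀).mul cu)
  -- continuity of real integrands
  have cnu : Continuous (fun x => ‖u x‖ ^ 2) := (cu.norm.pow 2)
  have cnu1 : Continuous (fun x => ‖u1 x‖ ^ 2) := (cu1.norm.pow 2)
  have cw : Continuous (fun x => (deriv a₁ x / 2 - a₀ x) * ‖u x‖ ^ 2) :=
    ((ca1'.div_const 2).sub ha₀).mul cnu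
  have chu : Continuous (fun x => (h x * (starRingEnd ℂ) (u x)).re) :=
    Complex.continuous_re.comp (ch.mul ccu)
  have ccGre : Continuous (fun x => (cG x).re) := Complex.continuous_re.comp ccG
  have clnu : Continuous (fun x => lam.re * ‖u x‖ ^ 2) := continuous_const.mul cnu
  set IU := ∫ x in (0:ℝ)..L, ‖u x‖ ^ 2 with hIU
  set IU1 := ∫ x in (0:ℝ)..L, ‖u1 x‖ ^ 2 with hIU1
  set IW := ∫ x in (0:ℝ)..L, (deriv a₁ x / 2 - a₀ x) * ‖u x‖ ^ 2 with hIW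
  set IH := ∫ x in (0:ℝ)..L, ‖h x‖ ^ 2 with hIH
  -- the integral identity
  have hintid : (∫ x in (0:ℝ)..L, (h x * (starRingEnd ℂ) (u x)).re)
      = lam.re * IU + IU1 + IW := by
    have e1 : (∫ x in (0:ℝ)..L, (h x * (starRingEnd ℂ) (u x)).re)
        = (∫ x in (0:ℝ)..L, (cG x).re)
          + ∫ x in (0:ℝ)..L, (lam.re * ‖u x‖ ^ 2 + ‖u1 x‖ ^ 2
              + (deriv a₁ x / 2 - a₀ x) * ‖u x‖ ^ 2) := by
      rw [← intervalIntegral.integral_add (ccGre.intervalIntegrable 0 L)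
        (((clnu.add cnu1).add cw).intervalIntegrable 0 L) (g := fun x => lam.re * ‖u x‖ ^ 2 + ‖u1 x‖ ^ 2
          + (deriv a₁ x / 2 - a₀ x) * ‖u x‖ ^ 2)]
      exact intervalIntegral.integral_congr fun x _ => by rw [hpoint x]; ring
    rw [e1, hbdry, zero_add,
      intervalIntegral.integral_add ((clnu.add cnu1).intervalIntegrable 0 L)
        (f := fun x => lam.re * ‖u x‖ ^ 2 + ‖u1 x‖ ^ 2)
        (cw.intervalIntegrable 0 L),
      intervalIntegral.integral_add (clnu.intervalIntegrable 0 L)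
        (cnu1.intervalIntegrable 0 L),
      intervalIntegral.integral_const_mul]
  have hIU0 : 0 ≤ IU := intervalIntegral.integral_nonneg hL.le (fun x _ => sq_nonneg _)
  have hIU10 : 0 ≤ IU1 := intervalIntegral.integral_nonneg hL.le (fun x _ => sq_nonneg _)
  -- bound on the potential term
  have hWbound : ∀ x ∈ Set.Icc (0:ℝ) L, -C₀ ≤ deriv a₁ x / 2 - a₀ x := by
    intro x hx
    have hbdd : BddAbove ((fun x => |a₀ x - deriv a₁ x / 2|) '' Set.Icc 0 L) :=
      (isCompact_Icc.image ((ha₀.sub (ca1'.div_const 2)).abs)).bddAbove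
    have hle : |a₀ x - deriv a₁ x / 2| ≤ C₀ := by
      rw [hC₀]; exact le_csSup hbdd ⟨x, hx, rfl⟩
    have := abs_le.mp hle
    linarith [this.2]
  have hIWlow : -C₀ * IU ≤ IW := by
    rw [hIW, hIU, ← intervalIntegral.integral_const_mul]
    apply intervalIntegral.integral_mono_on hL.le
      ((continuous_const.mul cnu).intervalIntegrable 0 L) (cw.intervalIntegrable 0 L)
    intro x hx
    exact mul_le_mul_of_nonneg_right (hWbound x hx) (sq_nonneg _)
  -- upper bound via Cauchy--Schwarz
  have hup : (∫ x in (0:ℝ)..L, (h x * (starRingEnd ℂ) (u x)).re)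
      ≤ Real.sqrt IH * Real.sqrt IU := by
    have step1 : (∫ x in (0:ℝ)..L, (h x * (starRingEnd ℂ) (u x)).re)
        ≤ ∫ x in (0:ℝ)..L, ‖h x‖ * ‖u x‖ := by
      apply intervalIntegral.integral_mono_on hL.le (chu.intervalIntegrable 0 L)
        ((ch.norm.mul cu.norm).intervalIntegrable 0 L)
      intro x _
      calc (h x * (starRingEnd ℂ) (u x)).re ≤ ‖h x * (starRingEnd ℂ) (u x)‖ :=
            Complex.re_le_norm _
        _ = ‖h x‖ * ‖u x‖ := by rw [norm_mul, RCLike.norm_conj]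
    exact step1.trans (interval_cauchy_schwarz 0 L hL.le _ _ ch.norm cu.norm)
  -- put everything together
  have hmain : (lam.re - C₀) * IU ≤ Real.sqrt IH * Real.sqrt IU := by
    have : (lam.re - C₀) * IU ≤ lam.re * IU + IU1 + IW := by nlinarith
    linarith [hintid ▸ this, hup]
  have hSU : Real.sqrt IU ^ 2 = IU := Real.sq_sqrt hIU0
  rcases eq_or_lt_of_le (Real.sqrt_nonneg IU) with hS | hS
  · rw [← hS, mul_zero]
    exact Real.sqrt_nonneg IH
  · have h2 : ((lam.re - C₀) * Real.sqrt IU) * Real.sqrt IU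
        ≤ Real.sqrt IH * Real.sqrt IU := by
      calc ((lam.re - C₀) * Real.sqrt IU) * Real.sqrt IU
          = (lam.re - C₀) * IU := by rw [mul_assoc, ← sq, hSU]
        _ ≤ Real.sqrt IH * Real.sqrt IU := hmain
    exact le_of_mul_le_mul_right h2 hS
end

section
/- Let f : ℝ → ℝ be twice continuously differentiable, g : ℝ → ℝ continuously differentiable, L > 0 and T > 0. If u and v are two classical L-periodic solutions of u_t + f(u)_x − u_xx + u_xxx = g(u) on [0,T] with the same initial datum, u(0,x) = v(0,x) for all x ∈ ℝ, and both u and v are bounded together with their spatial derivatives up to order three on [0,T]×ℝ, then u(t,x) = v(t,x) for all t ∈ [0,T] and x ∈ ℝ. -/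
open Set intervalIntegral MeasureTheory

private lemma periodic_deriv_of_periodic {h : ℝ → ℝ} {L : ℝ}
    (hp : ∀ x, h (x + L) = h x) (x : ℝ) : deriv h (x + L) = deriv h x := by
  have hfun : (fun y => h (y + L)) = h := funext hp
  rw [← deriv_comp_add_const, hfun]

private lemma slice_cont_x {F : ℝ × ℝ → ℝ} {s : Set ℝ}
    (h : ContinuousOn F (s ×ˢ (Set.univ : Set ℝ))) {t : ℝ} (ht : t ∈ s) :
    Continuous (fun x => F (t, x)) := by
  rw [← continuousOn_univ]
  exact h.comp (continuous_const.prodMk continuous_id).continuousOn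
    (fun x _ => ⟨ht, trivial⟩)

private lemma slice_cont_t {F : ℝ × ℝ → ℝ} {s : Set ℝ}
    (h : ContinuousOn F (s ×ˢ (Set.univ : Set ℝ))) (x : ℝ) :
    ContinuousOn (fun t => F (t, x)) s :=
  h.comp ((continuous_id.prodMk continuous_const).continuousOn)
    (fun t ht => ⟨ht, trivial⟩)

private lemma bound_deriv {φ : ℝ → ℝ} (hφ : Continuous φ) (M : ℝ) :
    ∃ C : ℝ, 0 ≤ C ∧ ∀ y ∈ Set.Icc (-M) M, |φ y| ≤ C := by
  obtain ⟨C, hC⟩ := (isCompact_Icc (a := -M) (b := M)).exists_bound_of_continuousOn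
    hφ.continuousOn
  rcases le_or_gt 0 C with h0 | h0
  · exact ⟨C, h0, fun y hy => hC y hy⟩
  · refine ⟨0, le_rfl, fun y hy => absurd ((abs_nonneg _).trans (hC y hy)) (not_le.mpr h0)⟩

private lemma lip_of_deriv_bound {φ : ℝ → ℝ} (hφ : Differentiable ℝ φ) {K M : ℝ}
    (hK : ∀ y ∈ Set.Icc (-M) M, |deriv φ y| ≤ K) :
    ∀ a ∈ Set.Icc (-M) M, ∀ b ∈ Set.Icc (-M) M, |φ a - φ b| ≤ K * |a - b| := by
  intro a ha b hb
  have := Convex.norm_image_sub_le_of_norm_deriv_le (f := φ) (s := Set.Icc (-M) M)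
    (fun y _ => hφ y) (fun y hy => hK y hy) (convex_Icc _ _) hb ha
  simpa [Real.norm_eq_abs] using this


private lemma pointwise_bound {Kg Cf Kf M a wx G0 P Q vx : ℝ}
    (hKg0 : 0 ≤ Kg) (hCf0 : 0 ≤ Cf) (hKf0 : 0 ≤ Kf) (hM0 : 0 ≤ M)
    (hg1 : |G0| ≤ Kg * |a|) (hf1 : |P| ≤ Cf) (hf2 : |Q| ≤ Kf * |a|) (hvx : |vx| ≤ M) :
    2 * a * (G0 - P * wx - Q * vx) ≤ (2*Kg + Cf^2 + 2*Kf*M) * a^2 + wx * wx := by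
  have n1 : 2*a*G0 ≤ 2*Kg*a^2 := by
    nlinarith [le_abs_self (a*G0), abs_mul a G0,
      mul_le_mul_of_nonneg_left hg1 (abs_nonneg a), sq_abs a]
  have n2 : -(2*a*(P*wx)) ≤ Cf^2*a^2 + wx*wx := by
    nlinarith [neg_le_abs (a*(P*wx)), abs_mul a (P*wx), abs_mul P wx,
      mul_le_mul_of_nonneg_left
        (mul_le_mul_of_nonneg_right hf1 (abs_nonneg wx)) (abs_nonneg a),
      sq_nonneg (Cf*|a| - |wx|), sq_abs a, sq_abs wx, abs_nonneg a, abs_nonneg wx]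
  have n3 : -(2*a*(Q*vx)) ≤ 2*Kf*M*a^2 := by
    calc -(2*a*(Q*vx)) = 2 * (-(a*(Q*vx))) := by ring
    _ ≤ 2 * |a*(Q*vx)| := by linarith [neg_le_abs (a*(Q*vx))]
    _ = 2 * (|a| * (|Q| * |vx|)) := by rw [abs_mul, abs_mul]
    _ ≤ 2 * (|a| * ((Kf*|a|) * M)) := by
        refine mul_le_mul_of_nonneg_left ?_ (by norm_num)
        exact mul_le_mul_of_nonneg_left
          (mul_le_mul hf2 hvx (abs_nonneg vx) (by positivity)) (abs_nonneg a)
    _ = 2*Kf*M*(|a| * |a|) := by ring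
    _ = 2*Kf*M*a^2 := by rw [abs_mul_abs_self]; ring
  linarith [n1, n2, n3]

/-- A classical `L`-periodic solution of `u_t + f(u)_x − u_xx + u_xxx = g(u)` on `[0,T]`:
`u` is continuous on `[0,T] × ℝ`, `L`-periodic in space, its partial derivatives
`∂ₜu, ∂ₓu, ∂ₓ²u, ∂ₓ³u` exist and are continuous on `(0,T] × ℝ`, and the equation holds
pointwise on `(0,T] × ℝ`. -/
def IsClassicalPeriodicSolutionOn (f g : ℝ → ℝ) (L T : ℝ) (u : ℝ → ℝ → ℝ) : Prop :=
  ContinuousOn (fun p : ℝ × ℝ => u p.1 p.2) (Set.Icc (0:ℝ) T ×ˢ (Set.univ : Set ℝ)) ∧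
  (∀ t ∈ Set.Icc (0:ℝ) T, ∀ x : ℝ, u t (x + L) = u t x) ∧
  (∀ t ∈ Set.Ioc (0:ℝ) T, ∀ x : ℝ,
    DifferentiableAt ℝ (fun s => u s x) t ∧
    DifferentiableAt ℝ (u t) x ∧
    DifferentiableAt ℝ (deriv (u t)) x ∧
    DifferentiableAt ℝ (deriv (deriv (u t))) x) ∧
  ContinuousOn (fun p : ℝ × ℝ => deriv (fun s => u s p.2) p.1)
    (Set.Ioc (0:ℝ) T ×ˢ (Set.univ : Set ℝ)) ∧
  ContinuousOn (fun p : ℝ × ℝ => deriv (u p.1) p.2)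
    (Set.Ioc (0:ℝ) T ×ˢ (Set.univ : Set ℝ)) ∧
  ContinuousOn (fun p : ℝ × ℝ => deriv (deriv (u p.1)) p.2)
    (Set.Ioc (0:ℝ) T ×ˢ (Set.univ : Set ℝ)) ∧
  ContinuousOn (fun p : ℝ × ℝ => deriv (deriv (deriv (u p.1))) p.2)
    (Set.Ioc (0:ℝ) T ×ˢ (Set.univ : Set ℝ)) ∧
  (∀ t ∈ Set.Ioc (0:ℝ) T, ∀ x : ℝ,
    deriv (fun s => u s x) t + deriv f (u t x) * deriv (u t) x -
      deriv (deriv (u t)) x + deriv (deriv (deriv (u t))) x = g (u t x))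

set_option maxHeartbeats 1000000 in
/-- **Uniqueness** of bounded classical `L`-periodic solutions of the generalized
KdV–Burgers equation with a source: two classical solutions on `[0,T]` with the same
initial datum, both bounded together with their spatial derivatives up to order three
on `[0,T] × ℝ`, coincide. -/
theorem uniqueness_generalized_KdVB
    (f g : ℝ → ℝ) (hf : ContDiff ℝ 2 f) (hg : ContDiff ℝ 1 g)
    (L T : ℝ) (hL : 0 < L) (hT : 0 < T)
    (u v : ℝ → ℝ → ℝ)
    (hu : IsClassicalPeriodicSolutionOn f g L T u)
    (hv : IsClassicalPeriodicSolutionOn f g L T v)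
    (h0 : ∀ x : ℝ, u 0 x = v 0 x)
    (hubd : ∃ M : ℝ, ∀ t ∈ Set.Icc (0:ℝ) T, ∀ x : ℝ,
      |u t x| ≤ M ∧ |deriv (u t) x| ≤ M ∧ |deriv (deriv (u t)) x| ≤ M ∧
        |deriv (deriv (deriv (u t))) x| ≤ M)
    (hvbd : ∃ M : ℝ, ∀ t ∈ Set.Icc (0:ℝ) T, ∀ x : ℝ,
      |v t x| ≤ M ∧ |deriv (v t) x| ≤ M ∧ |deriv (deriv (v t)) x| ≤ M ∧
        |deriv (deriv (deriv (v t))) x| ≤ M) :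
    ∀ t ∈ Set.Icc (0:ℝ) T, ∀ x : ℝ, u t x = v t x := by
  classical
  obtain ⟨huc, hup, hud, hutc, huxc, huxxc, huxxxc, hueq⟩ := hu
  obtain ⟨hvc, hvp, hvd, hvtc, hvxc, hvxxc, hvxxxc, hveq⟩ := hv
  obtain ⟨M₀, hM₀⟩ := hubd
  obtain ⟨M₁, hM₁⟩ := hvbd
  set M : ℝ := max M₀ M₁ with hMdef
  have hMu : ∀ t ∈ Set.Icc (0:ℝ) T, ∀ x : ℝ, |u t x| ≤ M ∧ |deriv (u t) x| ≤ M ∧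
      |deriv (deriv (u t)) x| ≤ M ∧ |deriv (deriv (deriv (u t))) x| ≤ M := by
    intro t ht x
    obtain ⟨a, b, c, d⟩ := hM₀ t ht x
    exact ⟨a.trans (le_max_left _ _), b.trans (le_max_left _ _),
      c.trans (le_max_left _ _), d.trans (le_max_left _ _)⟩
  have hMv : ∀ t ∈ Set.Icc (0:ℝ) T, ∀ x : ℝ, |v t x| ≤ M ∧ |deriv (v t) x| ≤ M ∧
      |deriv (deriv (v t)) x| ≤ M ∧ |deriv (deriv (deriv (v t))) x| ≤ M := by
    intro t ht x
    obtain ⟨a, b, c, d⟩ := hM₁ t ht x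
    exact ⟨a.trans (le_max_right _ _), b.trans (le_max_right _ _),
      c.trans (le_max_right _ _), d.trans (le_max_right _ _)⟩
  have hM0 : 0 ≤ M :=
    le_trans (abs_nonneg _) (hMu 0 (by constructor <;> [rfl; exact hT.le]) 0).1
  have huK : ∀ t ∈ Set.Icc (0:ℝ) T, ∀ x : ℝ, u t x ∈ Set.Icc (-M) M := by
    intro t ht x; exact abs_le.mp (hMu t ht x).1
  have hvK : ∀ t ∈ Set.Icc (0:ℝ) T, ∀ x : ℝ, v t x ∈ Set.Icc (-M) M := by
    intro t ht x; exact abs_le.mp (hMv t ht x).1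
  -- regularity of f and g
  have hf2 : ContDiff ℝ (1 + 1 : ℕ) f := by exact_mod_cast hf
  have hfd : Differentiable ℝ f := hf.differentiable (by norm_num)
  have hf' : ContDiff ℝ 1 (deriv f) := by
    have := (contDiff_succ_iff_deriv (n := 1)).mp (by exact_mod_cast hf2)
    exact this.2.2
  have hf'd : Differentiable ℝ (deriv f) := hf'.differentiable one_ne_zero
  have hf''c : Continuous (deriv (deriv f)) := hf'.continuous_deriv le_rfl
  have hgd : Differentiable ℝ g := hg.differentiable one_ne_zero
  have hg'c : Continuous (deriv g) := hg.continuous_deriv le_rfl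
  -- constants
  obtain ⟨Cf, hCf0, hCf⟩ := bound_deriv (hf'.continuous) M
  obtain ⟨Kf, hKf0, hKf⟩ := bound_deriv hf''c M
  obtain ⟨Kg, hKg0, hKg⟩ := bound_deriv hg'c M
  obtain ⟨Cg, hCg0, hCg⟩ := bound_deriv hg.continuous M
  have hflip : ∀ a ∈ Set.Icc (-M) M, ∀ b ∈ Set.Icc (-M) M,
      |deriv f a - deriv f b| ≤ Kf * |a - b| := lip_of_deriv_bound hf'd hKf
  have hglip : ∀ a ∈ Set.Icc (-M) M, ∀ b ∈ Set.Icc (-M) M,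
      |g a - g b| ≤ Kg * |a - b| := lip_of_deriv_bound hgd hKg
  -- difference function and its spatial derivatives
  set W : ℝ → ℝ → ℝ := fun t x => u t x - v t x with hWdef
  set Wx : ℝ → ℝ → ℝ := fun t x => deriv (u t) x - deriv (v t) x with hWxdef
  set Wxx : ℝ → ℝ → ℝ := fun t x => deriv (deriv (u t)) x - deriv (deriv (v t)) x with hWxxdef
  set Wxxx : ℝ → ℝ → ℝ :=
    fun t x => deriv (deriv (deriv (u t))) x - deriv (deriv (deriv (v t))) x with hWxxxdef
  set Wt : ℝ → ℝ → ℝ :=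
    fun t x => deriv (fun s => u s x) t - deriv (fun s => v s x) t with hWtdef
  -- slice continuity
  have hIoc_sub : Set.Ioc (0:ℝ) T ⊆ Set.Icc 0 T := Set.Ioc_subset_Icc_self
  have hcW : ∀ t ∈ Set.Icc (0:ℝ) T, Continuous (W t) := by
    intro t ht
    exact (slice_cont_x huc ht).sub (slice_cont_x hvc ht)
  have hcWx : ∀ t ∈ Set.Ioc (0:ℝ) T, Continuous (Wx t) := by
    intro t ht
    exact (slice_cont_x huxc ht).sub (slice_cont_x hvxc ht)
  have hcWxx : ∀ t ∈ Set.Ioc (0:ℝ) T, Continuous (Wxx t) := by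
    intro t ht
    exact (slice_cont_x huxxc ht).sub (slice_cont_x hvxxc ht)
  have hcWxxx : ∀ t ∈ Set.Ioc (0:ℝ) T, Continuous (Wxxx t) := by
    intro t ht
    exact (slice_cont_x huxxxc ht).sub (slice_cont_x hvxxxc ht)
  have hcWt : ∀ t ∈ Set.Ioc (0:ℝ) T, Continuous (Wt t) := by
    intro t ht
    exact (slice_cont_x hutc ht).sub (slice_cont_x hvtc ht)
  have hcu_t : ∀ x : ℝ, ContinuousOn (fun t => W t x) (Set.Icc 0 T) := by
    intro x
    exact (slice_cont_t huc x).sub (slice_cont_t hvc x)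
  -- periodicity of W and its derivatives
  have hpW : ∀ t ∈ Set.Icc (0:ℝ) T, ∀ x : ℝ, W t (x + L) = W t x := by
    intro t ht x
    simp only [hWdef, hup t ht x, hvp t ht x]
  have hpux : ∀ t ∈ Set.Icc (0:ℝ) T, ∀ x : ℝ, deriv (u t) (x + L) = deriv (u t) x :=
    fun t ht x => periodic_deriv_of_periodic (hup t ht) x
  have hpvx : ∀ t ∈ Set.Icc (0:ℝ) T, ∀ x : ℝ, deriv (v t) (x + L) = deriv (v t) x :=
    fun t ht x => periodic_deriv_of_periodic (hvp t ht) x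
  have hpWx : ∀ t ∈ Set.Icc (0:ℝ) T, ∀ x : ℝ, Wx t (x + L) = Wx t x := by
    intro t ht x
    simp only [hWxdef, hpux t ht x, hpvx t ht x]
  have hpWxx : ∀ t ∈ Set.Icc (0:ℝ) T, ∀ x : ℝ, Wxx t (x + L) = Wxx t x := by
    intro t ht x
    simp only [hWxxdef, periodic_deriv_of_periodic (hpux t ht) x,
      periodic_deriv_of_periodic (hpvx t ht) x]
  -- spatial HasDerivAt facts
  have hWd : ∀ t ∈ Set.Ioc (0:ℝ) T, ∀ x : ℝ, HasDerivAt (W t) (Wx t x) x := by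
    intro t ht x
    exact ((hud t ht x).2.1.hasDerivAt).sub ((hvd t ht x).2.1.hasDerivAt)
  have hWxd : ∀ t ∈ Set.Ioc (0:ℝ) T, ∀ x : ℝ, HasDerivAt (Wx t) (Wxx t x) x := by
    intro t ht x
    exact ((hud t ht x).2.2.1.hasDerivAt).sub ((hvd t ht x).2.2.1.hasDerivAt)
  have hWxxd : ∀ t ∈ Set.Ioc (0:ℝ) T, ∀ x : ℝ, HasDerivAt (Wxx t) (Wxxx t x) x := by
    intro t ht x
    exact ((hud t ht x).2.2.2.hasDerivAt).sub ((hvd t ht x).2.2.2.hasDerivAt)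
  -- the energy
  set E : ℝ → ℝ := fun t => ∫ x in (0:ℝ)..L, (W t x)^2 with hEdef
  have hEnn : ∀ t ∈ Set.Icc (0:ℝ) T, 0 ≤ E t := by
    intro t ht
    exact intervalIntegral.integral_nonneg hL.le (fun x _ => sq_nonneg _)
  have hE0 : E 0 = 0 := by
    have : ∀ x : ℝ, (W 0 x)^2 = 0 := by
      intro x; simp [hWdef, h0 x]
    simp only [hEdef, this, intervalIntegral.integral_zero]
  -- continuity of the energy
  have habsW : ∀ t ∈ Set.Icc (0:ℝ) T, ∀ x : ℝ, |W t x| ≤ 2*M := by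
    intro t ht x
    have h1 := (hMu t ht x).1; have h2 := (hMv t ht x).1
    simp only [hWdef]
    calc |u t x - v t x| ≤ |u t x| + |v t x| := abs_sub _ _
    _ ≤ 2*M := by linarith
  have hEc : ContinuousOn E (Set.Icc 0 T) := by
    intro t₀ ht₀
    apply intervalIntegral.continuousWithinAt_of_dominated_interval
      (bound := fun _ => (2*M)^2)
    · filter_upwards [self_mem_nhdsWithin] with t ht
      exact ((hcW t ht).pow 2).aestronglyMeasurable.restrict
    · filter_upwards [self_mem_nhdsWithin] with t ht
      filter_upwards with x _
      calc ‖(W t x)^2‖ = |W t x|^2 := by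
            rw [Real.norm_eq_abs, abs_pow]
      _ ≤ (2*M)^2 := by
            have := habsW t ht x
            nlinarith [abs_nonneg (W t x)]
    · exact intervalIntegrable_const
    · filter_upwards with x _
      exact ((hcu_t x).pow 2) t₀ ht₀
  -- bound on the time derivative
  set Ct : ℝ := 2*(Cg + Cf*M + 2*M) with hCtdef
  have htd_bound : ∀ w : ℝ → ℝ → ℝ,
      (∀ t ∈ Set.Icc (0:ℝ) T, ∀ x : ℝ, |w t x| ≤ M ∧ |deriv (w t) x| ≤ M ∧
        |deriv (deriv (w t)) x| ≤ M ∧ |deriv (deriv (deriv (w t))) x| ≤ M) →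
      (∀ t ∈ Set.Ioc (0:ℝ) T, ∀ x : ℝ,
        deriv (fun s => w s x) t + deriv f (w t x) * deriv (w t) x -
          deriv (deriv (w t)) x + deriv (deriv (deriv (w t))) x = g (w t x)) →
      ∀ t ∈ Set.Ioc (0:ℝ) T, ∀ x : ℝ,
        |deriv (fun s => w s x) t| ≤ Cg + Cf*M + 2*M := by
    intro w hMw heqw t ht x
    have htI := hIoc_sub ht
    obtain ⟨a1, b1, c1, d1⟩ := hMw t htI x
    have hwK : w t x ∈ Set.Icc (-M) M := abs_le.mp a1
    have hg1 := abs_le.mp (hCg _ hwK)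
    have habs : |deriv f (w t x) * deriv (w t) x| ≤ Cf * M := by
      rw [abs_mul]
      exact mul_le_mul (hCf _ hwK) b1 (abs_nonneg _) hCf0
    have h2 := abs_le.mp habs
    have h3 := abs_le.mp c1
    have h4 := abs_le.mp d1
    have heq1 := heqw t ht x
    apply abs_le.mpr
    constructor <;> linarith
  have hWtb : ∀ t ∈ Set.Ioc (0:ℝ) T, ∀ x : ℝ, |Wt t x| ≤ Ct := by
    intro t ht x
    have e1 := htd_bound u hMu hueq t ht x
    have e2 := htd_bound v hMv hveq t ht x
    have e1' := abs_le.mp e1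
    have e2' := abs_le.mp e2
    apply abs_le.mpr
    simp only [hWtdef, hCtdef] at *
    constructor <;> [linarith; linarith]
  -- derivative of the energy
  have hED : ∀ t ∈ Set.Ioo (0:ℝ) T,
      HasDerivAt E (∫ x in (0:ℝ)..L, 2 * W t x * Wt t x) t := by
    intro t ht
    set ε : ℝ := min t (T - t) with hεdef
    have hε : 0 < ε := lt_min ht.1 (by linarith [ht.2])
    have hball : Metric.ball t ε ⊆ Set.Ioc 0 T := by
      intro s hs
      rw [Real.ball_eq_Ioo] at hs
      constructor
      · have : t - ε ≥ 0 := by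
          have := min_le_left t (T - t); simp only [hεdef] at *; linarith
        linarith [hs.1]
      · have : t + ε ≤ T := by
          have := min_le_right t (T - t); simp only [hεdef] at *; linarith
        linarith [hs.2]
    have main := (intervalIntegral.hasDerivAt_integral_of_dominated_loc_of_deriv_le
      (F := fun s x => (W s x)^2) (F' := fun s x => 2 * W s x * Wt s x)
      (x₀ := t) (a := 0) (b := L) (bound := fun _ => 2 * (2*M) * Ct) (μ := MeasureTheory.volume)
      (Metric.ball_mem_nhds t hε) ?_ ?_ ?_ ?_ ?_ ?_).2
    · exact main
    · filter_upwards [isOpen_Ioo.mem_nhds ht] with s hs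
      exact ((hcW s (Set.mem_Icc_of_Ioo hs)).pow 2).aestronglyMeasurable.restrict
    · exact (((hcW t (Set.mem_Icc_of_Ioo ht)).pow 2)).intervalIntegrable 0 L
    · have htIoc : t ∈ Set.Ioc (0:ℝ) T := ⟨ht.1, ht.2.le⟩
      exact ((continuous_const.mul (hcW t (Set.mem_Icc_of_Ioo ht))).mul
        (hcWt t htIoc)).aestronglyMeasurable.restrict
    · filter_upwards with x _ s hs
      have hsIoc := hball hs
      have hsI := hIoc_sub hsIoc
      rw [Real.norm_eq_abs, abs_mul, abs_mul]
      have h1 := habsW s hsI x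
      have h2 := hWtb s hsIoc x
      have hCt0 : 0 ≤ Ct := le_trans (abs_nonneg _) h2
      calc |(2:ℝ)| * |W s x| * |Wt s x| ≤ 2 * (2*M) * Ct := by
            rw [abs_two]
            apply mul_le_mul _ h2 (abs_nonneg _) (by positivity)
            apply mul_le_mul_of_nonneg_left h1 (by norm_num)
      _ ≤ 2 * (2*M) * Ct := le_rfl
    · exact intervalIntegrable_const
    · filter_upwards with x _ s hs
      have hsIoc := hball hs
      have hder : HasDerivAt (fun r => W r x) (Wt s x) s :=
        ((hud s hsIoc x).1.hasDerivAt).sub ((hvd s hsIoc x).1.hasDerivAt)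
      have := hder.pow 2
      refine this.congr_deriv ?_
      push_cast
      ring
  -- the main energy inequality
  set C1 : ℝ := 2*Kg + Cf^2 + 2*Kf*M with hC1def
  have hC10 : 0 ≤ C1 := by positivity
  have hDle : ∀ t ∈ Set.Ioc (0:ℝ) T,
      (∫ x in (0:ℝ)..L, 2 * W t x * Wt t x) ≤ C1 * E t := by
    intro t ht
    have htI := hIoc_sub ht
    -- integrability
    have iW2 : IntervalIntegrable (fun x => (W t x)^2) volume 0 L :=
      ((hcW t htI).pow 2).intervalIntegrable 0 L
    have iWxWx : IntervalIntegrable (fun x => Wx t x * Wx t x) volume 0 L :=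
      ((hcWx t ht).mul (hcWx t ht)).intervalIntegrable 0 L
    have iWWxx : IntervalIntegrable (fun x => W t x * Wxx t x) volume 0 L :=
      ((hcW t htI).mul (hcWxx t ht)).intervalIntegrable 0 L
    have iWxWxx : IntervalIntegrable (fun x => Wx t x * Wxx t x) volume 0 L :=
      ((hcWx t ht).mul (hcWxx t ht)).intervalIntegrable 0 L
    have iWWxxx : IntervalIntegrable (fun x => W t x * Wxxx t x) volume 0 L :=
      ((hcW t htI).mul (hcWxxx t ht)).intervalIntegrable 0 L
    -- boundary values
    have bW : W t L = W t 0 := by rw [← zero_add L]; exact hpW t htI 0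
    have bWx : Wx t L = Wx t 0 := by rw [← zero_add L]; exact hpWx t htI 0
    have bWxx : Wxx t L = Wxx t 0 := by rw [← zero_add L]; exact hpWxx t htI 0
    -- integration by parts identities
    have k1 : (∫ x in (0:ℝ)..L, (Wx t x * Wx t x + W t x * Wxx t x)) =
        W t L * Wx t L - W t 0 * Wx t 0 := by
      apply intervalIntegral.integral_eq_sub_of_hasDerivAt
      · intro x _
        exact (hWd t ht x).mul (hWxd t ht x)
      · exact iWxWx.add iWWxx
    have e1 : (∫ x in (0:ℝ)..L, W t x * Wxx t x) =
        -∫ x in (0:ℝ)..L, Wx t x * Wx t x := by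
      have := intervalIntegral.integral_add iWxWx iWWxx
      rw [this, bW, bWx] at k1
      linarith
    have k2 : (∫ x in (0:ℝ)..L, (Wx t x * Wxx t x + W t x * Wxxx t x)) =
        W t L * Wxx t L - W t 0 * Wxx t 0 := by
      apply intervalIntegral.integral_eq_sub_of_hasDerivAt
      · intro x _
        exact (hWd t ht x).mul (hWxxd t ht x)
      · exact iWxWxx.add iWWxxx
    have k3 : (∫ x in (0:ℝ)..L, (Wxx t x * Wx t x + Wx t x * Wxx t x)) =
        Wx t L * Wx t L - Wx t 0 * Wx t 0 := by
      apply intervalIntegral.integral_eq_sub_of_hasDerivAt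
      · intro x _
        exact (hWxd t ht x).mul (hWxd t ht x)
      · have : IntervalIntegrable (fun x => Wxx t x * Wx t x) volume 0 L :=
          ((hcWxx t ht).mul (hcWx t ht)).intervalIntegrable 0 L
        exact this.add iWxWxx
    have e3 : (∫ x in (0:ℝ)..L, Wx t x * Wxx t x) = 0 := by
      have h2 : (∫ x in (0:ℝ)..L, (Wxx t x * Wx t x + Wx t x * Wxx t x)) =
          2 * ∫ x in (0:ℝ)..L, Wx t x * Wxx t x := by
        rw [← intervalIntegral.integral_const_mul]
        apply intervalIntegral.integral_congr
        intro x _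
        ring
      rw [h2, bWx] at k3
      linarith
    have e2 : (∫ x in (0:ℝ)..L, W t x * Wxxx t x) = 0 := by
      have := intervalIntegral.integral_add iWxWxx iWWxxx
      rw [this, bW, bWxx, e3] at k2
      linarith
    -- the lower-order term
    set A : ℝ → ℝ := fun x => 2 * W t x * ((g (u t x) - g (v t x))
      - deriv f (u t x) * Wx t x
      - (deriv f (u t x) - deriv f (v t x)) * deriv (v t) x) with hAdef
    have hcA : Continuous A := by
      apply (continuous_const.mul (hcW t htI)).mul
      apply Continuous.sub
      apply Continuous.sub
      · exact (hg.continuous.comp (slice_cont_x huc htI)).sub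
          (hg.continuous.comp (slice_cont_x hvc htI))
      · exact (hf'.continuous.comp (slice_cont_x huc htI)).mul (hcWx t ht)
      · exact ((hf'.continuous.comp (slice_cont_x huc htI)).sub
          (hf'.continuous.comp (slice_cont_x hvc htI))).mul (slice_cont_x hvxc ht)
    have iA : IntervalIntegrable A volume 0 L := hcA.intervalIntegrable 0 L
    have iRHS : IntervalIntegrable (fun x => C1 * (W t x)^2 + Wx t x * Wx t x) volume 0 L :=
      (iW2.const_mul C1).add iWxWx
    -- pointwise identity from the two equations
    have hid : ∀ x : ℝ, 2 * W t x * Wt t x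
        = A x + 2*(W t x * Wxx t x) - 2*(W t x * Wxxx t x) := by
      intro x
      have h1 := hueq t ht x
      have h2 := hveq t ht x
      simp only [hAdef, hWdef, hWxdef, hWxxdef, hWxxxdef, hWtdef]
      linear_combination (2 * (u t x - v t x)) * h1 - (2 * (u t x - v t x)) * h2
    -- pointwise bound on A
    have hAle : ∀ x : ℝ, A x ≤ C1 * (W t x)^2 + Wx t x * Wx t x := by
      intro x
      have hg1 := hglip _ (huK t htI x) _ (hvK t htI x)
      have hf1 := hCf _ (huK t htI x)
      have hf2 := hflip _ (huK t htI x) _ (hvK t htI x)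
      have hvx := (hMv t htI x).2.1
      have := pointwise_bound (wx := deriv (u t) x - deriv (v t) x)
        hKg0 hCf0 hKf0 hM0 hg1 hf1 hf2 hvx
      simpa only [hAdef, hWdef, hWxdef, hC1def] using this
    -- put the pieces together
    have hWxWx_nn : 0 ≤ ∫ x in (0:ℝ)..L, Wx t x * Wx t x :=
      intervalIntegral.integral_nonneg hL.le (fun x _ => mul_self_nonneg _)
    have hAint : (∫ x in (0:ℝ)..L, A x) ≤ C1 * E t + ∫ x in (0:ℝ)..L, Wx t x * Wx t x := by
      have := intervalIntegral.integral_mono_on hL.le iA iRHS (fun x _ => hAle x)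
      rw [intervalIntegral.integral_add (iW2.const_mul C1) iWxWx,
        intervalIntegral.integral_const_mul] at this
      exact this
    calc (∫ x in (0:ℝ)..L, 2 * W t x * Wt t x)
        = ∫ x in (0:ℝ)..L, (A x + 2*(W t x * Wxx t x) - 2*(W t x * Wxxx t x)) :=
          intervalIntegral.integral_congr (fun x _ => hid x)
      _ = (∫ x in (0:ℝ)..L, A x) + 2*(∫ x in (0:ℝ)..L, W t x * Wxx t x)
            - 2*(∫ x in (0:ℝ)..L, W t x * Wxxx t x) := by
          rw [intervalIntegral.integral_sub (iA.add (iWWxx.const_mul 2)) (iWWxxx.const_mul 2),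
            intervalIntegral.integral_add iA (iWWxx.const_mul 2),
            intervalIntegral.integral_const_mul, intervalIntegral.integral_const_mul]
      _ = (∫ x in (0:ℝ)..L, A x) - 2*(∫ x in (0:ℝ)..L, Wx t x * Wx t x) := by
          rw [e1, e2]; ring
      _ ≤ C1 * E t + (∫ x in (0:ℝ)..L, Wx t x * Wx t x)
            - 2*(∫ x in (0:ℝ)..L, Wx t x * Wx t x) := by linarith
      _ ≤ C1 * E t := by linarith
  -- Gronwall via monotonicity
  set G : ℝ → ℝ := fun t => E t * Real.exp (-C1 * t) with hGdef
  have hexp : ∀ s : ℝ, HasDerivAt (fun r => Real.exp (-C1 * r)) (Real.exp (-C1 * s) * -C1) s := by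
    intro s
    have h1 : HasDerivAt (fun r : ℝ => -C1 * r) (-C1) s := by
      simpa using (hasDerivAt_id s).const_mul (-C1)
    exact h1.exp
  have hGd : ∀ s ∈ Set.Ioo (0:ℝ) T, HasDerivAt G
      ((∫ x in (0:ℝ)..L, 2 * W s x * Wt s x) * Real.exp (-C1 * s)
        + E s * (Real.exp (-C1 * s) * -C1)) s := by
    intro s hs
    exact (hED s hs).mul (hexp s)
  have hGant : AntitoneOn G (Set.Icc 0 T) := by
    apply antitoneOn_of_deriv_nonpos (convex_Icc 0 T)
    · exact hEc.mul ((Real.continuous_exp.comp (continuous_const.mul continuous_id)).continuousOn)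
    · rw [interior_Icc]
      intro s hs
      exact ((hGd s hs).differentiableAt).differentiableWithinAt
    · rw [interior_Icc]
      intro s hs
      rw [(hGd s hs).deriv]
      have hD := hDle s ⟨hs.1, hs.2.le⟩
      have hE := hEnn s (Set.mem_Icc_of_Ioo hs)
      have hex := Real.exp_pos (-C1 * s)
      nlinarith
  -- conclusion
  intro t ht x
  have hGt : G t ≤ G 0 := hGant (Set.left_mem_Icc.mpr (by linarith [hT])) ht ht.1
  have hG0 : G 0 = 0 := by
    simp only [hGdef, hE0, zero_mul]
  have hEt : E t = 0 := by
    have hex := Real.exp_pos (-C1 * t)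
    have h1 : E t * Real.exp (-C1 * t) ≤ 0 := by
      rw [← hG0]; exact hGt
    have h2 := hEnn t ht
    nlinarith
  have hzero : ∀ y ∈ Set.Icc (0:ℝ) L, W t y = 0 := by
    by_contra hcon
    push_neg at hcon
    obtain ⟨y, hy, hyne⟩ := hcon
    have hpos : 0 < E t := by
      apply intervalIntegral.integral_pos hL
      · exact ((hcW t ht).pow 2).continuousOn
      · exact fun z _ => sq_nonneg _
      · exact ⟨y, hy, by positivity⟩
    linarith
  have hper : Function.Periodic (W t) L := fun z => hpW t ht z
  obtain ⟨y, hy, hxy⟩ := hper.exists_mem_Ico₀ hL x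
  have : W t x = 0 := by
    rw [hxy]
    exact hzero y ⟨hy.1, hy.2.le⟩
  have : u t x - v t x = 0 := this
  linarith
end
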